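/- arXiv:2312.15641 — 2 statements merged into one kernel-verified Lean document; each statement's English description precedes it below -/
import Mathlib

section
/- Let b : K → R and d : K → D be injective graph morphisms, and assume the node set and edge set of D are disjoint from those of R. Define H by: V_H = V_D ∪ (V_R \ b_V(V_K)); E_H = E_D ∪ (E_R \ b_E(E_K)); s_H(e) = s_D(e) if e ∈ E_D, s_H(e) = d_V(b_V^{-1}(s_R(e))) if e ∈ E_R \ b_E(E_K) and s_R(e) ∈ b_V(V_K), and s_H(e) = s_R(e) otherwise; t_H is defined analogously from t_D and t_R; l_H(v) = l_D(v) if v ∈ V_D and l_H(v) = l_R(v) otherwise; m_H is defined analogously from m_D and m_R. Then H is a graph, the inclusion D → H (identity on nodes and edges of D) is a graph morphism, and the pair of maps h defined on nodes and edges x of R by h(x) = x if x ∈ R \ b(K) and h(x) = d(b^{-1}(x)) otherwise is an injective graph morphism h : R → H. -/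
/-- A pre-graph over node identifiers `V`, edge identifiers `E`,
node labels `α` and edge labels `β`. -/
structure PreGraph (V E α β : Type) where
  nodes : Set V
  edges : Set E
  src : E → V
  tgt : E → V
  lab : V → α
  mrk : E → β

/-- `G` is a graph: node and edge sets are finite and sources/targets of
edges are nodes. -/
def IsGraph {V E α β : Type} (G : PreGraph V E α β) : Prop :=
  G.nodes.Finite ∧ G.edges.Finite ∧
    (∀ e ∈ G.edges, G.src e ∈ G.nodes) ∧ (∀ e ∈ G.edges, G.tgt e ∈ G.nodes)

/-- A pair of node/edge mappings. -/
structure PreMorph (V1 E1 V2 E2 : Type) where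
  fv : V1 → V2
  fe : E1 → E2

/-- `f` is a graph morphism from `G` to `H`. -/
def IsMorphism {V1 E1 V2 E2 α β : Type} (G : PreGraph V1 E1 α β)
    (H : PreGraph V2 E2 α β) (f : PreMorph V1 E1 V2 E2) : Prop :=
  (∀ v ∈ G.nodes, f.fv v ∈ H.nodes) ∧
  (∀ e ∈ G.edges, f.fe e ∈ H.edges) ∧
  (∀ e ∈ G.edges, f.fv (G.src e) = H.src (f.fe e)) ∧
  (∀ e ∈ G.edges, f.fv (G.tgt e) = H.tgt (f.fe e)) ∧
  (∀ v ∈ G.nodes, G.lab v = H.lab (f.fv v)) ∧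
  (∀ e ∈ G.edges, G.mrk e = H.mrk (f.fe e))

/-- Composition of morphisms, componentwise. -/
def comp {V1 E1 V2 E2 V3 E3 : Type} (g : PreMorph V2 E2 V3 E3)
    (f : PreMorph V1 E1 V2 E2) : PreMorph V1 E1 V3 E3 :=
  ⟨g.fv ∘ f.fv, g.fe ∘ f.fe⟩

/-- Equality of morphisms on the nodes and edges of the source graph `G`. -/
def MorEq {V1 E1 V2 E2 α β : Type} (G : PreGraph V1 E1 α β)
    (f g : PreMorph V1 E1 V2 E2) : Prop :=
  (∀ v ∈ G.nodes, f.fv v = g.fv v) ∧ (∀ e ∈ G.edges, f.fe e = g.fe e)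

/-- `f` is injective on the source graph `G`. -/
def MorInjective {V1 E1 V2 E2 α β : Type} (G : PreGraph V1 E1 α β)
    (f : PreMorph V1 E1 V2 E2) : Prop :=
  Set.InjOn f.fv G.nodes ∧ Set.InjOn f.fe G.edges

/-- `f : G → H` is surjective onto the target graph `H`. -/
def MorSurjective {V1 E1 V2 E2 α β : Type} (G : PreGraph V1 E1 α β)
    (H : PreGraph V2 E2 α β) (f : PreMorph V1 E1 V2 E2) : Prop :=
  (∀ v ∈ H.nodes, ∃ w ∈ G.nodes, f.fv w = v) ∧
  (∀ e ∈ H.edges, ∃ d ∈ G.edges, f.fe d = e)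

/-- `f : G → H` is bijective between the node and edge sets. -/
def MorBijective {V1 E1 V2 E2 α β : Type} (G : PreGraph V1 E1 α β)
    (H : PreGraph V2 E2 α β) (f : PreMorph V1 E1 V2 E2) : Prop :=
  Set.BijOn f.fv G.nodes H.nodes ∧ Set.BijOn f.fe G.edges H.edges

/-- An isomorphism is a bijective morphism. -/
def IsIsomorphism {V1 E1 V2 E2 α β : Type} (G : PreGraph V1 E1 α β)
    (H : PreGraph V2 E2 α β) (f : PreMorph V1 E1 V2 E2) : Prop :=
  IsMorphism G H f ∧ MorBijective G H f

/-- Two graphs are isomorphic if there is an isomorphism between them. -/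
def Isomorphic {V1 E1 V2 E2 α β : Type} (G : PreGraph V1 E1 α β)
    (H : PreGraph V2 E2 α β) : Prop :=
  ∃ f : PreMorph V1 E1 V2 E2, IsIsomorphism G H f

/-- The identity morphism. -/
def idMor (V E : Type) : PreMorph V E V E := ⟨id, id⟩

/-- `D` together with `f : B → D` and `g : C → D` is a pushout of
`b : A → B` and `c : A → C`. -/
def IsPushout {V1 E1 V2 E2 V3 E3 V4 E4 α β : Type}
    (A : PreGraph V1 E1 α β) (B : PreGraph V2 E2 α β)
    (C : PreGraph V3 E3 α β) (D : PreGraph V4 E4 α β)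
    (b : PreMorph V1 E1 V2 E2) (c : PreMorph V1 E1 V3 E3)
    (f : PreMorph V2 E2 V4 E4) (g : PreMorph V3 E3 V4 E4) : Prop :=
  IsMorphism A B b ∧ IsMorphism A C c ∧ IsMorphism B D f ∧ IsMorphism C D g ∧
  MorEq A (comp f b) (comp g c) ∧
  ∀ (V' E' : Type) (D' : PreGraph V' E' α β)
    (p : PreMorph V2 E2 V' E') (t : PreMorph V3 E3 V' E'),
    IsGraph D' → IsMorphism B D' p → IsMorphism C D' t →
    MorEq A (comp p b) (comp t c) →
    ∃ u : PreMorph V4 E4 V' E',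
      IsMorphism D D' u ∧ MorEq B (comp u f) p ∧ MorEq C (comp u g) t ∧
      ∀ u' : PreMorph V4 E4 V' E',
        IsMorphism D D' u' → MorEq B (comp u' f) p → MorEq C (comp u' g) t →
        MorEq D u' u

/-- `A` together with `b : A → B` and `c : A → C` is a pullback of
`f : B → D` and `g : C → D`. -/
def IsPullback {V1 E1 V2 E2 V3 E3 V4 E4 α β : Type}
    (A : PreGraph V1 E1 α β) (B : PreGraph V2 E2 α β)
    (C : PreGraph V3 E3 α β) (D : PreGraph V4 E4 α β)
    (b : PreMorph V1 E1 V2 E2) (c : PreMorph V1 E1 V3 E3)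
    (f : PreMorph V2 E2 V4 E4) (g : PreMorph V3 E3 V4 E4) : Prop :=
  IsMorphism A B b ∧ IsMorphism A C c ∧ IsMorphism B D f ∧ IsMorphism C D g ∧
  MorEq A (comp f b) (comp g c) ∧
  ∀ (V' E' : Type) (A' : PreGraph V' E' α β)
    (p : PreMorph V' E' V2 E2) (t : PreMorph V' E' V3 E3),
    IsGraph A' → IsMorphism A' B p → IsMorphism A' C t →
    MorEq A' (comp f p) (comp g t) →
    ∃ u : PreMorph V' E' V1 E1,
      IsMorphism A' A u ∧ MorEq A' (comp b u) p ∧ MorEq A' (comp c u) t ∧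
      ∀ u' : PreMorph V' E' V1 E1,
        IsMorphism A' A u' → MorEq A' (comp b u') p → MorEq A' (comp c u') t →
        MorEq A' u' u

open Classical

/-- The gluing of `D` and `R` along `K` via `b : K → R` and `d : K → D`. -/
noncomputable def glueGraph {VK EK V E α β : Type}
    (K : PreGraph VK EK α β) (R D : PreGraph V E α β)
    (b d : PreMorph VK EK V E) : PreGraph V E α β where
  nodes := D.nodes ∪ (R.nodes \ (b.fv '' K.nodes))
  edges := D.edges ∪ (R.edges \ (b.fe '' K.edges))
  src e :=
    if e ∈ D.edges then D.src e
    else if h : e ∈ R.edges \ (b.fe '' K.edges) ∧ R.src e ∈ b.fv '' K.nodes then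
      d.fv h.2.choose
    else R.src e
  tgt e :=
    if e ∈ D.edges then D.tgt e
    else if h : e ∈ R.edges \ (b.fe '' K.edges) ∧ R.tgt e ∈ b.fv '' K.nodes then
      d.fv h.2.choose
    else R.tgt e
  lab v := if v ∈ D.nodes then D.lab v else R.lab v
  mrk e := if e ∈ D.edges then D.mrk e else R.mrk e

/-- The morphism `h : R → H`: identity on `R \ b(K)`, and `d ∘ b⁻¹` on the
image of `K` under `b`. -/
noncomputable def glueMorph {VK EK V E α β : Type}
    (K : PreGraph VK EK α β) (R : PreGraph V E α β)
    (b d : PreMorph VK EK V E) : PreMorph V E V E where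
  fv x :=
    if x ∈ R.nodes \ (b.fv '' K.nodes) then x
    else if h : x ∈ b.fv '' K.nodes then d.fv h.choose
    else x
  fe x :=
    if x ∈ R.edges \ (b.fe '' K.edges) then x
    else if h : x ∈ b.fe '' K.edges then d.fe h.choose
    else x

/-- the gluing construction yields a graph `H`, the inclusion
`D → H` is a morphism, and `h : R → H` is an injective morphism. -/
theorem gluing {VK EK V E α β : Type}
    (K : PreGraph VK EK α β) (R D : PreGraph V E α β)
    (b d : PreMorph VK EK V E)
    (hK : IsGraph K) (hR : IsGraph R) (hD : IsGraph D)
    (hb : IsMorphism K R b) (hbi : MorInjective K b)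
    (hd : IsMorphism K D d) (hdi : MorInjective K d)
    (hdisjV : Disjoint D.nodes R.nodes) (hdisjE : Disjoint D.edges R.edges) :
    IsGraph (glueGraph K R D b d) ∧
    IsMorphism D (glueGraph K R D b d) (idMor V E) ∧
    IsMorphism R (glueGraph K R D b d) (glueMorph K R b d) ∧
    MorInjective R (glueMorph K R b d) := by
  obtain ⟨hKVf, hKEf, hKs, hKt⟩ := hK
  obtain ⟨hRVf, hREf, hRs, hRt⟩ := hR
  obtain ⟨hDVf, hDEf, hDs, hDt⟩ := hD
  obtain ⟨hbV, hbE, hbs, hbt, hbl, hbm⟩ := hb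
  obtain ⟨hdV, hdE, hds, hdt, hdl, hdm⟩ := hd
  obtain ⟨hbiV, hbiE⟩ := hbi
  obtain ⟨hdiV, hdiE⟩ := hdi
  have hDRv : ∀ v ∈ R.nodes, v ∉ D.nodes := fun v hv h =>
    Set.disjoint_left.mp hdisjV h hv
  have hDRe : ∀ e ∈ R.edges, e ∉ D.edges := fun e he h =>
    Set.disjoint_left.mp hdisjE h he
  -- evaluation lemmas for glueMorph
  have hfvIn : ∀ (x : V) (h : x ∈ b.fv '' K.nodes),
      (glueMorph K R b d).fv x = d.fv h.choose := by
    intro x h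
    simp only [glueMorph]
    rw [if_neg (fun hh => hh.2 h), dif_pos h]
  have hfvOut : ∀ x ∈ R.nodes, x ∉ b.fv '' K.nodes →
      (glueMorph K R b d).fv x = x := by
    intro x hx h
    simp only [glueMorph]
    rw [if_pos ⟨hx, h⟩]
  have hfeIn : ∀ (x : E) (h : x ∈ b.fe '' K.edges),
      (glueMorph K R b d).fe x = d.fe h.choose := by
    intro x h
    simp only [glueMorph]
    rw [if_neg (fun hh => hh.2 h), dif_pos h]
  have hfeOut : ∀ x ∈ R.edges, x ∉ b.fe '' K.edges →
      (glueMorph K R b d).fe x = x := by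
    intro x hx h
    simp only [glueMorph]
    rw [if_pos ⟨hx, h⟩]
  refine ⟨⟨?_, ?_, ?_, ?_⟩, ⟨?_, ?_, ?_, ?_, ?_, ?_⟩, ⟨?_, ?_, ?_, ?_, ?_, ?_⟩, ?_, ?_⟩
  -- IsGraph H : finiteness of nodes
  · exact hDVf.union (hRVf.subset Set.diff_subset)
  -- finiteness of edges
  · exact hDEf.union (hREf.subset Set.diff_subset)
  -- sources are nodes
  · rintro e (he | ⟨he, hne⟩)
    · simp only [glueGraph]
      rw [if_pos he]
      exact Or.inl (hDs _ he)
    · have heD := hDRe _ he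
      simp only [glueGraph]
      rw [if_neg heD]
      by_cases h2 : R.src e ∈ b.fv '' K.nodes
      · have hc : e ∈ R.edges \ (b.fe '' K.edges) ∧ R.src e ∈ b.fv '' K.nodes :=
          ⟨⟨he, hne⟩, h2⟩
        rw [dif_pos hc]
        exact Or.inl (hdV _ hc.2.choose_spec.1)
      · rw [dif_neg (fun hc => h2 hc.2)]
        exact Or.inr ⟨hRs _ he, h2⟩
  -- targets are nodes
  · rintro e (he | ⟨he, hne⟩)
    · simp only [glueGraph]
      rw [if_pos he]
      exact Or.inl (hDt _ he)
    · have heD := hDRe _ he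
      simp only [glueGraph]
      rw [if_neg heD]
      by_cases h2 : R.tgt e ∈ b.fv '' K.nodes
      · have hc : e ∈ R.edges \ (b.fe '' K.edges) ∧ R.tgt e ∈ b.fv '' K.nodes :=
          ⟨⟨he, hne⟩, h2⟩
        rw [dif_pos hc]
        exact Or.inl (hdV _ hc.2.choose_spec.1)
      · rw [dif_neg (fun hc => h2 hc.2)]
        exact Or.inr ⟨hRt _ he, h2⟩
  -- inclusion D → H : nodes
  · intro v hv
    exact Or.inl hv
  -- edges
  · intro e he
    exact Or.inl he
  -- src
  · intro e he
    show D.src e = (glueGraph K R D b d).src e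
    simp only [glueGraph]
    rw [if_pos he]
  -- tgt
  · intro e he
    show D.tgt e = (glueGraph K R D b d).tgt e
    simp only [glueGraph]
    rw [if_pos he]
  -- lab
  · intro v hv
    show D.lab v = (glueGraph K R D b d).lab v
    simp only [glueGraph]
    rw [if_pos hv]
  -- mrk
  · intro e he
    show D.mrk e = (glueGraph K R D b d).mrk e
    simp only [glueGraph]
    rw [if_pos he]
  -- morphism R → H : nodes
  · intro v hv
    by_cases h1 : v ∈ b.fv '' K.nodes
    · rw [hfvIn v h1]
      exact Or.inl (hdV _ h1.choose_spec.1)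
    · rw [hfvOut v hv h1]
      exact Or.inr ⟨hv, h1⟩
  -- edges
  · intro e he
    by_cases h1 : e ∈ b.fe '' K.edges
    · rw [hfeIn e h1]
      exact Or.inl (hdE _ h1.choose_spec.1)
    · rw [hfeOut e he h1]
      exact Or.inr ⟨he, h1⟩
  -- src compatibility
  · intro e he
    have heD := hDRe _ he
    by_cases h1 : e ∈ b.fe '' K.edges
    · have hk := h1.choose_spec
      have hsrce : R.src e = b.fv (K.src h1.choose) := by
        rw [hbs _ hk.1, hk.2]
      have h2 : R.src e ∈ b.fv '' K.nodes :=
        ⟨K.src h1.choose, hKs _ hk.1, hsrce.symm⟩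
      have hch : h2.choose = K.src h1.choose :=
        hbiV h2.choose_spec.1 (hKs _ hk.1) (h2.choose_spec.2.trans hsrce)
      rw [hfvIn _ h2, hfeIn e h1, hch]
      show d.fv (K.src h1.choose) = (glueGraph K R D b d).src (d.fe h1.choose)
      simp only [glueGraph]
      rw [if_pos (hdE _ hk.1)]
      exact hds _ hk.1
    · rw [hfeOut e he h1]
      by_cases h2 : R.src e ∈ b.fv '' K.nodes
      · have hc : e ∈ R.edges \ (b.fe '' K.edges) ∧ R.src e ∈ b.fv '' K.nodes :=
          ⟨⟨he, h1⟩, h2⟩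
        rw [hfvIn _ h2]
        show d.fv h2.choose = (glueGraph K R D b d).src e
        simp only [glueGraph]
        rw [if_neg heD, dif_pos hc]
      · rw [hfvOut _ (hRs _ he) h2]
        show R.src e = (glueGraph K R D b d).src e
        simp only [glueGraph]
        rw [if_neg heD, dif_neg (fun hc => h2 hc.2)]
  -- tgt compatibility
  · intro e he
    have heD := hDRe _ he
    by_cases h1 : e ∈ b.fe '' K.edges
    · have hk := h1.choose_spec
      have htgte : R.tgt e = b.fv (K.tgt h1.choose) := by
        rw [hbt _ hk.1, hk.2]
      have h2 : R.tgt e ∈ b.fv '' K.nodes :=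
        ⟨K.tgt h1.choose, hKt _ hk.1, htgte.symm⟩
      have hch : h2.choose = K.tgt h1.choose :=
        hbiV h2.choose_spec.1 (hKt _ hk.1) (h2.choose_spec.2.trans htgte)
      rw [hfvIn _ h2, hfeIn e h1, hch]
      show d.fv (K.tgt h1.choose) = (glueGraph K R D b d).tgt (d.fe h1.choose)
      simp only [glueGraph]
      rw [if_pos (hdE _ hk.1)]
      exact hdt _ hk.1
    · rw [hfeOut e he h1]
      by_cases h2 : R.tgt e ∈ b.fv '' K.nodes
      · have hc : e ∈ R.edges \ (b.fe '' K.edges) ∧ R.tgt e ∈ b.fv '' K.nodes :=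
          ⟨⟨he, h1⟩, h2⟩
        rw [hfvIn _ h2]
        show d.fv h2.choose = (glueGraph K R D b d).tgt e
        simp only [glueGraph]
        rw [if_neg heD, dif_pos hc]
      · rw [hfvOut _ (hRt _ he) h2]
        show R.tgt e = (glueGraph K R D b d).tgt e
        simp only [glueGraph]
        rw [if_neg heD, dif_neg (fun hc => h2 hc.2)]
  -- lab compatibility
  · intro v hv
    by_cases h1 : v ∈ b.fv '' K.nodes
    · rw [hfvIn v h1]
      show R.lab v = (glueGraph K R D b d).lab (d.fv h1.choose)
      simp only [glueGraph]
      rw [if_pos (hdV _ h1.choose_spec.1), ← hdl _ h1.choose_spec.1,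
        hbl _ h1.choose_spec.1, h1.choose_spec.2]
    · rw [hfvOut v hv h1]
      show R.lab v = (glueGraph K R D b d).lab v
      simp only [glueGraph]
      rw [if_neg (hDRv _ hv)]
  -- mrk compatibility
  · intro e he
    by_cases h1 : e ∈ b.fe '' K.edges
    · rw [hfeIn e h1]
      show R.mrk e = (glueGraph K R D b d).mrk (d.fe h1.choose)
      simp only [glueGraph]
      rw [if_pos (hdE _ h1.choose_spec.1), ← hdm _ h1.choose_spec.1,
        hbm _ h1.choose_spec.1, h1.choose_spec.2]
    · rw [hfeOut e he h1]
      show R.mrk e = (glueGraph K R D b d).mrk e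
      simp only [glueGraph]
      rw [if_neg (hDRe _ he)]
  -- injectivity on nodes
  · intro x hx y hy hxy
    by_cases h1 : x ∈ b.fv '' K.nodes <;> by_cases h2 : y ∈ b.fv '' K.nodes
    · rw [hfvIn x h1, hfvIn y h2] at hxy
      have := hdiV h1.choose_spec.1 h2.choose_spec.1 hxy
      rw [← h1.choose_spec.2, ← h2.choose_spec.2, this]
    · rw [hfvIn x h1, hfvOut y hy h2] at hxy
      exact absurd (hxy ▸ hdV _ h1.choose_spec.1) (hDRv _ hy)
    · rw [hfvOut x hx h1, hfvIn y h2] at hxy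
      exact absurd (hxy ▸ hdV _ h2.choose_spec.1) (hDRv _ hx)
    · rwa [hfvOut x hx h1, hfvOut y hy h2] at hxy
  -- injectivity on edges
  · intro x hx y hy hxy
    by_cases h1 : x ∈ b.fe '' K.edges <;> by_cases h2 : y ∈ b.fe '' K.edges
    · rw [hfeIn x h1, hfeIn y h2] at hxy
      have := hdiE h1.choose_spec.1 h2.choose_spec.1 hxy
      rw [← h1.choose_spec.2, ← h2.choose_spec.2, this]
    · rw [hfeIn x h1, hfeOut y hy h2] at hxy
      exact absurd (hxy ▸ hdE _ h1.choose_spec.1) (hDRe _ hy)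
    · rw [hfeOut x hx h1, hfeIn y h2] at hxy
      exact absurd (hxy ▸ hdE _ h2.choose_spec.1) (hDRe _ hx)
    · rwa [hfeOut x hx h1, hfeOut y hy h2] at hxy
end

section
/- Let p1 = ⟨L1 ← K1 → R1⟩ and p2 = ⟨L2 ← K2 → R2⟩ be rules, and let G ⇒_{p1,m1} H1 and G ⇒_{p2,m2} H2 be parallel independent direct derivations (with injective matches m1 : L1 → G and m2 : L2 → G and context graphs D1 and D2). Then there exist a graph G' and injective matches m2' : L2 → H1 and m1' : L1 → H2 together with direct derivations H1 ⇒_{p2,m2'} G' and H2 ⇒_{p1,m1'} G' such that the derivation sequences G ⇒_{p1,m1} H1 ⇒_{p2,m2'} G' and G ⇒_{p2,m2} H2 ⇒_{p1,m1'} G' are each sequentially independent. -/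
/-- A direct derivation `G ⇒ H` via rule `⟨L ← K → R⟩` (with `bl : K → L`,
`br : K → R`), match `m : L → G`, context `D` with `k : K → D`,
`dG : D → G`, `dH : D → H` and comatch `r : R → H`: both squares are pushouts. -/
def IsDirectDerivation
    {Vl El Vk Ek Vr Er Vg Eg Vd Ed Vh Eh α β : Type}
    (L : PreGraph Vl El α β) (K : PreGraph Vk Ek α β) (R : PreGraph Vr Er α β)
    (G : PreGraph Vg Eg α β) (D : PreGraph Vd Ed α β) (H : PreGraph Vh Eh α β)
    (bl : PreMorph Vk Ek Vl El) (br : PreMorph Vk Ek Vr Er)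
    (m : PreMorph Vl El Vg Eg) (k : PreMorph Vk Ek Vd Ed)
    (dG : PreMorph Vd Ed Vg Eg) (dH : PreMorph Vd Ed Vh Eh)
    (r : PreMorph Vr Er Vh Eh) : Prop :=
  IsPushout K L D G bl k m dG ∧ IsPushout K R D H br k r dH


/-! ### Auxiliary material for the Church-Rosser theorem -/

open Classical in
noncomputable instance (priority := low) : ∀ (p : Prop), Decidable p := fun p => Classical.propDecidable p

section Basic

variable {V1 E1 V2 E2 V3 E3 V4 E4 : Type} {α β : Type}

lemma comp_isMorphism {G : PreGraph V1 E1 α β} {H : PreGraph V2 E2 α β}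
    {K : PreGraph V3 E3 α β} {f : PreMorph V1 E1 V2 E2} {g : PreMorph V2 E2 V3 E3}
    (hf : IsMorphism G H f) (hg : IsMorphism H K g) : IsMorphism G K (comp g f) := by
  obtain ⟨f1, f2, f3, f4, f5, f6⟩ := hf
  obtain ⟨g1, g2, g3, g4, g5, g6⟩ := hg
  refine ⟨fun v hv => g1 _ (f1 v hv), fun e he => g2 _ (f2 e he), ?_, ?_, ?_, ?_⟩
  · intro e he
    show g.fv (f.fv (G.src e)) = K.src (g.fe (f.fe e))
    rw [f3 e he, g3 _ (f2 e he)]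
  · intro e he
    show g.fv (f.fv (G.tgt e)) = K.tgt (g.fe (f.fe e))
    rw [f4 e he, g4 _ (f2 e he)]
  · intro v hv
    show G.lab v = K.lab (g.fv (f.fv v))
    rw [f5 v hv, g5 _ (f1 v hv)]
  · intro e he
    show G.mrk e = K.mrk (g.fe (f.fe e))
    rw [f6 e he, g6 _ (f2 e he)]


lemma comp_fv {V1 E1 V2 E2 V3 E3 : Type} (g : PreMorph V2 E2 V3 E3)
    (f : PreMorph V1 E1 V2 E2) (x : V1) : (comp g f).fv x = g.fv (f.fv x) := rfl

lemma comp_fe {V1 E1 V2 E2 V3 E3 : Type} (g : PreMorph V2 E2 V3 E3)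
    (f : PreMorph V1 E1 V2 E2) (x : E1) : (comp g f).fe x = g.fe (f.fe x) := rfl

lemma idMor_isMorphism (G : PreGraph V1 E1 α β) : IsMorphism G G (idMor V1 E1) :=
  ⟨fun _ hv => hv, fun _ he => he, fun _ _ => rfl, fun _ _ => rfl,
   fun _ _ => rfl, fun _ _ => rfl⟩

lemma IsPushout.symmPO {A : PreGraph V1 E1 α β} {B : PreGraph V2 E2 α β}
    {C : PreGraph V3 E3 α β} {D : PreGraph V4 E4 α β}
    {b : PreMorph V1 E1 V2 E2} {c : PreMorph V1 E1 V3 E3}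
    {f : PreMorph V2 E2 V4 E4} {g : PreMorph V3 E3 V4 E4}
    (h : IsPushout A B C D b c f g) : IsPushout A C B D c b g f := by
  obtain ⟨hb, hc, hf, hg, hcm, hup⟩ := h
  refine ⟨hc, hb, hg, hf, ⟨fun v hv => (hcm.1 v hv).symm, fun e he => (hcm.2 e he).symm⟩, ?_⟩
  intro V' E' D' p t hD' hp ht hpt
  obtain ⟨u, hu, hu1, hu2, huniq⟩ := hup V' E' D' t p hD' ht hp
    ⟨fun v hv => (hpt.1 v hv).symm, fun e he => (hpt.2 e he).symm⟩
  exact ⟨u, hu, hu2, hu1, fun u' h1 h2 h3 => huniq u' h1 h3 h2⟩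

/-- Sufficiency criterion for pushouts: a commuting square of injective
`f`, `g` which is jointly surjective (witnessed functionally by `φ`, `ψ`)
and has intersection exactly `A` is a pushout. -/
lemma isPushout_of_data {A : PreGraph V1 E1 α β} {B : PreGraph V2 E2 α β}
    {C : PreGraph V3 E3 α β} {D : PreGraph V4 E4 α β}
    {b : PreMorph V1 E1 V2 E2} {c : PreMorph V1 E1 V3 E3}
    {f : PreMorph V2 E2 V4 E4} {g : PreMorph V3 E3 V4 E4}
    (hB : IsGraph B) (hC : IsGraph C)
    (hb : IsMorphism A B b) (hc : IsMorphism A C c)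
    (hf : IsMorphism B D f) (hg : IsMorphism C D g)
    (hcomm : MorEq A (comp f b) (comp g c))
    (hfinjv : Set.InjOn f.fv B.nodes) (hfinje : Set.InjOn f.fe B.edges)
    (hginjv : Set.InjOn g.fv C.nodes) (hginje : Set.InjOn g.fe C.edges)
    (φ : V4 → V2 ⊕ V3) (ψ : E4 → E2 ⊕ E3)
    (hφ : ∀ z ∈ D.nodes, (∃ x ∈ B.nodes, φ z = Sum.inl x ∧ f.fv x = z) ∨
      (∃ y ∈ C.nodes, φ z = Sum.inr y ∧ g.fv y = z))
    (hψ : ∀ z ∈ D.edges, (∃ x ∈ B.edges, ψ z = Sum.inl x ∧ f.fe x = z) ∨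
      (∃ y ∈ C.edges, ψ z = Sum.inr y ∧ g.fe y = z))
    (hintv : ∀ x ∈ B.nodes, ∀ y ∈ C.nodes, f.fv x = g.fv y →
      ∃ a ∈ A.nodes, b.fv a = x ∧ c.fv a = y)
    (hinte : ∀ x ∈ B.edges, ∀ y ∈ C.edges, f.fe x = g.fe y →
      ∃ a ∈ A.edges, b.fe a = x ∧ c.fe a = y) :
    IsPushout A B C D b c f g := by
  refine ⟨hb, hc, hf, hg, hcomm, ?_⟩
  intro V' E' D' p t hD' hp ht hpt
  set u : PreMorph V4 E4 V' E' := ⟨fun z => Sum.elim p.fv t.fv (φ z),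
    fun z => Sum.elim p.fe t.fe (ψ z)⟩ with hu
  have key1 : ∀ x ∈ B.nodes, u.fv (f.fv x) = p.fv x := by
    intro x hx
    rcases hφ (f.fv x) (hf.1 x hx) with ⟨x', hx', heq, hfx⟩ | ⟨y', hy', heq, hgy⟩
    · have : x' = x := hfinjv hx' hx hfx
      simp [hu, heq, this]
    · obtain ⟨a, ha, hba, hca⟩ := hintv x hx y' hy' hgy.symm
      have h1 : t.fv y' = p.fv x := by
        rw [← hba, ← hca]; exact (hpt.1 a ha).symm
      simp [hu, heq, h1]
  have key1e : ∀ x ∈ B.edges, u.fe (f.fe x) = p.fe x := by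
    intro x hx
    rcases hψ (f.fe x) (hf.2.1 x hx) with ⟨x', hx', heq, hfx⟩ | ⟨y', hy', heq, hgy⟩
    · have : x' = x := hfinje hx' hx hfx
      simp [hu, heq, this]
    · obtain ⟨a, ha, hba, hca⟩ := hinte x hx y' hy' hgy.symm
      have h1 : t.fe y' = p.fe x := by
        rw [← hba, ← hca]; exact (hpt.2 a ha).symm
      simp [hu, heq, h1]
  have key2 : ∀ y ∈ C.nodes, u.fv (g.fv y) = t.fv y := by
    intro y hy
    rcases hφ (g.fv y) (hg.1 y hy) with ⟨x', hx', heq, hfx⟩ | ⟨y', hy', heq, hgy⟩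
    · obtain ⟨a, ha, hba, hca⟩ := hintv x' hx' y hy hfx
      have h1 : p.fv x' = t.fv y := by
        rw [← hba, ← hca]; exact (hpt.1 a ha)
      simp [hu, heq, h1]
    · have : y' = y := hginjv hy' hy hgy
      simp [hu, heq, this]
  have key2e : ∀ y ∈ C.edges, u.fe (g.fe y) = t.fe y := by
    intro y hy
    rcases hψ (g.fe y) (hg.2.1 y hy) with ⟨x', hx', heq, hfx⟩ | ⟨y', hy', heq, hgy⟩
    · obtain ⟨a, ha, hba, hca⟩ := hinte x' hx' y hy hfx
      have h1 : p.fe x' = t.fe y := by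
        rw [← hba, ← hca]; exact (hpt.2 a ha)
      simp [hu, heq, h1]
    · have : y' = y := hginje hy' hy hgy
      simp [hu, heq, this]
  have humor : IsMorphism D D' u := by
    refine ⟨?_, ?_, ?_, ?_, ?_, ?_⟩
    · intro z hz
      rcases hφ z hz with ⟨x, hx, heq, hfx⟩ | ⟨y, hy, heq, hgy⟩
      · simpa [hu, heq] using hp.1 x hx
      · simpa [hu, heq] using ht.1 y hy
    · intro z hz
      rcases hψ z hz with ⟨x, hx, heq, hfx⟩ | ⟨y, hy, heq, hgy⟩
      · simpa [hu, heq] using hp.2.1 x hx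
      · simpa [hu, heq] using ht.2.1 y hy
    · intro z hz
      rcases hψ z hz with ⟨x, hx, heq, hfx⟩ | ⟨y, hy, heq, hgy⟩
      · have h1 : u.fe z = p.fe x := by simp [hu, heq]
        have h2 : D.src z = f.fv (B.src x) := by rw [← hfx, ← hf.2.2.1 x hx]
        rw [h1, h2, key1 _ (hB.2.2.1 x hx), hp.2.2.1 x hx]
      · have h1 : u.fe z = t.fe y := by simp [hu, heq]
        have h2 : D.src z = g.fv (C.src y) := by rw [← hgy, ← hg.2.2.1 y hy]
        rw [h1, h2, key2 _ (hC.2.2.1 y hy), ht.2.2.1 y hy]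
    · intro z hz
      rcases hψ z hz with ⟨x, hx, heq, hfx⟩ | ⟨y, hy, heq, hgy⟩
      · have h1 : u.fe z = p.fe x := by simp [hu, heq]
        have h2 : D.tgt z = f.fv (B.tgt x) := by rw [← hfx, ← hf.2.2.2.1 x hx]
        rw [h1, h2, key1 _ (hB.2.2.2 x hx), hp.2.2.2.1 x hx]
      · have h1 : u.fe z = t.fe y := by simp [hu, heq]
        have h2 : D.tgt z = g.fv (C.tgt y) := by rw [← hgy, ← hg.2.2.2.1 y hy]
        rw [h1, h2, key2 _ (hC.2.2.2 y hy), ht.2.2.2.1 y hy]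
    · intro z hz
      rcases hφ z hz with ⟨x, hx, heq, hfx⟩ | ⟨y, hy, heq, hgy⟩
      · have h1 : u.fv z = p.fv x := by simp [hu, heq]
        have h2 : D.lab z = B.lab x := by rw [← hfx, ← hf.2.2.2.2.1 x hx]
        rw [h1, h2, hp.2.2.2.2.1 x hx]
      · have h1 : u.fv z = t.fv y := by simp [hu, heq]
        have h2 : D.lab z = C.lab y := by rw [← hgy, ← hg.2.2.2.2.1 y hy]
        rw [h1, h2, ht.2.2.2.2.1 y hy]
    · intro z hz
      rcases hψ z hz with ⟨x, hx, heq, hfx⟩ | ⟨y, hy, heq, hgy⟩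
      · have h1 : u.fe z = p.fe x := by simp [hu, heq]
        have h2 : D.mrk z = B.mrk x := by rw [← hfx, ← hf.2.2.2.2.2 x hx]
        rw [h1, h2, hp.2.2.2.2.2 x hx]
      · have h1 : u.fe z = t.fe y := by simp [hu, heq]
        have h2 : D.mrk z = C.mrk y := by rw [← hgy, ← hg.2.2.2.2.2 y hy]
        rw [h1, h2, ht.2.2.2.2.2 y hy]
  refine ⟨u, humor, ⟨key1, key1e⟩, ⟨key2, key2e⟩, ?_⟩
  intro u' hu' h1 h2
  constructor
  · intro z hz
    rcases hφ z hz with ⟨x, hx, heq, hfx⟩ | ⟨y, hy, heq, hgy⟩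
    · have : u.fv z = p.fv x := by simp [hu, heq]
      rw [this, ← hfx]; exact h1.1 x hx
    · have : u.fv z = t.fv y := by simp [hu, heq]
      rw [this, ← hgy]; exact h2.1 y hy
  · intro z hz
    rcases hψ z hz with ⟨x, hx, heq, hfx⟩ | ⟨y, hy, heq, hgy⟩
    · have : u.fe z = p.fe x := by simp [hu, heq]
      rw [this, ← hfx]; exact h1.2 x hx
    · have : u.fe z = t.fe y := by simp [hu, heq]
      rw [this, ← hgy]; exact h2.2 y hy

end Basic

section ExplicitPushout

variable {V1 E1 V2 E2 V3 E3 : Type} {α β : Type}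

/-- The canonical injection `B → B +_A C` of the explicit pushout. -/
noncomputable def poF (A : PreGraph V1 E1 α β) (b : PreMorph V1 E1 V2 E2)
    (c : PreMorph V1 E1 V3 E3) : PreMorph V2 E2 (V2 ⊕ V3) (E2 ⊕ E3) where
  fv x := if h : ∃ a ∈ A.nodes, b.fv a = x then Sum.inr (c.fv h.choose) else Sum.inl x
  fe x := if h : ∃ a ∈ A.edges, b.fe a = x then Sum.inr (c.fe h.choose) else Sum.inl x

/-- The canonical injection `C → B +_A C`. -/
def poG (V2 E2 V3 E3 : Type) : PreMorph V3 E3 (V2 ⊕ V3) (E2 ⊕ E3) :=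
  ⟨Sum.inr, Sum.inr⟩

/-- The explicit pushout graph `B +_A C`. -/
noncomputable def poD (A : PreGraph V1 E1 α β) (B : PreGraph V2 E2 α β)
    (C : PreGraph V3 E3 α β) (b : PreMorph V1 E1 V2 E2) (c : PreMorph V1 E1 V3 E3) :
    PreGraph (V2 ⊕ V3) (E2 ⊕ E3) α β where
  nodes := Sum.inl '' (B.nodes \ b.fv '' A.nodes) ∪ Sum.inr '' C.nodes
  edges := Sum.inl '' (B.edges \ b.fe '' A.edges) ∪ Sum.inr '' C.edges
  src := Sum.elim (fun d => (poF A b c).fv (B.src d)) (fun d => Sum.inr (C.src d))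
  tgt := Sum.elim (fun d => (poF A b c).fv (B.tgt d)) (fun d => Sum.inr (C.tgt d))
  lab := Sum.elim B.lab C.lab
  mrk := Sum.elim B.mrk C.mrk

variable {A : PreGraph V1 E1 α β} {B : PreGraph V2 E2 α β} {C : PreGraph V3 E3 α β}
  {b : PreMorph V1 E1 V2 E2} {c : PreMorph V1 E1 V3 E3}

lemma poF_eq_of_mem {a : V1} (hb : Set.InjOn b.fv A.nodes) (ha : a ∈ A.nodes) :
    (poF A b c).fv (b.fv a) = Sum.inr (c.fv a) := by
  have h : ∃ a' ∈ A.nodes, b.fv a' = b.fv a := ⟨a, ha, rfl⟩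
  have := h.choose_spec
  have heq : h.choose = a := hb this.1 ha this.2
  simp [poF, dif_pos h, heq]

lemma poF_eq_of_mem_e {a : E1} (hb : Set.InjOn b.fe A.edges) (ha : a ∈ A.edges) :
    (poF A b c).fe (b.fe a) = Sum.inr (c.fe a) := by
  have h : ∃ a' ∈ A.edges, b.fe a' = b.fe a := ⟨a, ha, rfl⟩
  have := h.choose_spec
  have heq : h.choose = a := hb this.1 ha this.2
  simp [poF, dif_pos h, heq]

lemma poF_eq_of_not_mem {x : V2} (hx : ¬ ∃ a ∈ A.nodes, b.fv a = x) :
    (poF A b c).fv x = Sum.inl x := by simp [poF, dif_neg hx]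

lemma poF_eq_of_not_mem_e {x : E2} (hx : ¬ ∃ a ∈ A.edges, b.fe a = x) :
    (poF A b c).fe x = Sum.inl x := by simp [poF, dif_neg hx]

lemma poF_inr {x : V2} {y : V3} (h : (poF A b c).fv x = Sum.inr y) :
    ∃ a ∈ A.nodes, b.fv a = x ∧ c.fv a = y := by
  by_cases hx : ∃ a ∈ A.nodes, b.fv a = x
  · have hs := hx.choose_spec
    have : (poF A b c).fv x = Sum.inr (c.fv hx.choose) := by simp [poF, dif_pos hx]
    rw [this] at h
    exact ⟨hx.choose, hs.1, hs.2, (Sum.inr.injEq _ _).mp h⟩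
  · rw [poF_eq_of_not_mem hx] at h; exact absurd h (by simp)

lemma poF_inr_e {x : E2} {y : E3} (h : (poF A b c).fe x = Sum.inr y) :
    ∃ a ∈ A.edges, b.fe a = x ∧ c.fe a = y := by
  by_cases hx : ∃ a ∈ A.edges, b.fe a = x
  · have hs := hx.choose_spec
    have : (poF A b c).fe x = Sum.inr (c.fe hx.choose) := by simp [poF, dif_pos hx]
    rw [this] at h
    exact ⟨hx.choose, hs.1, hs.2, (Sum.inr.injEq _ _).mp h⟩
  · rw [poF_eq_of_not_mem_e hx] at h; exact absurd h (by simp)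

lemma poF_isMorphism (hA : IsGraph A) (hb : IsMorphism A B b) (hc : IsMorphism A C c)
    (hbinj : MorInjective A b) :
    IsMorphism B (poD A B C b c) (poF A b c) := by
  have hnodes : ∀ x ∈ B.nodes, (poF A b c (α := α) (β := β)).fv x ∈ (poD A B C b c).nodes := by
    intro x hx
    by_cases h : ∃ a ∈ A.nodes, b.fv a = x
    · have hs := h.choose_spec
      have : (poF A b c).fv x = Sum.inr (c.fv h.choose) := by simp [poF, dif_pos h]
      rw [this]
      exact Or.inr ⟨c.fv h.choose, hc.1 _ hs.1, rfl⟩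
    · rw [poF_eq_of_not_mem h]
      exact Or.inl ⟨x, ⟨hx, by simpa using h⟩, rfl⟩
  have hedges : ∀ x ∈ B.edges, (poF A b c (α := α) (β := β)).fe x ∈ (poD A B C b c).edges := by
    intro x hx
    by_cases h : ∃ a ∈ A.edges, b.fe a = x
    · have hs := h.choose_spec
      have : (poF A b c).fe x = Sum.inr (c.fe h.choose) := by simp [poF, dif_pos h]
      rw [this]
      exact Or.inr ⟨c.fe h.choose, hc.2.1 _ hs.1, rfl⟩
    · rw [poF_eq_of_not_mem_e h]
      exact Or.inl ⟨x, ⟨hx, by simpa using h⟩, rfl⟩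
  refine ⟨hnodes, hedges, ?_, ?_, ?_, ?_⟩
  · intro e he
    by_cases h : ∃ a ∈ A.edges, b.fe a = e
    · obtain ⟨a, ha, hba⟩ := h
      have h1 : (poF A b c (α := α) (β := β)).fe e = Sum.inr (c.fe a) := by
        rw [← hba]; exact poF_eq_of_mem_e hbinj.2 ha
      have h2 : B.src e = b.fv (A.src a) := by rw [← hba, ← hb.2.2.1 a ha]
      rw [h1, h2, poF_eq_of_mem hbinj.1 (hA.2.2.1 a ha)]
      show _ = Sum.inr (C.src (c.fe a))
      rw [← hc.2.2.1 a ha]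
    · rw [poF_eq_of_not_mem_e h]; rfl
  · intro e he
    by_cases h : ∃ a ∈ A.edges, b.fe a = e
    · obtain ⟨a, ha, hba⟩ := h
      have h1 : (poF A b c (α := α) (β := β)).fe e = Sum.inr (c.fe a) := by
        rw [← hba]; exact poF_eq_of_mem_e hbinj.2 ha
      have h2 : B.tgt e = b.fv (A.tgt a) := by rw [← hba, ← hb.2.2.2.1 a ha]
      rw [h1, h2, poF_eq_of_mem hbinj.1 (hA.2.2.2 a ha)]
      show _ = Sum.inr (C.tgt (c.fe a))
      rw [← hc.2.2.2.1 a ha]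
    · rw [poF_eq_of_not_mem_e h]; rfl
  · intro v hv
    by_cases h : ∃ a ∈ A.nodes, b.fv a = v
    · obtain ⟨a, ha, hba⟩ := h
      have h1 : (poF A b c (α := α) (β := β)).fv v = Sum.inr (c.fv a) := by
        rw [← hba]; exact poF_eq_of_mem hbinj.1 ha
      rw [h1]
      show B.lab v = C.lab (c.fv a)
      rw [← hc.2.2.2.2.1 a ha, ← hba, ← hb.2.2.2.2.1 a ha]
    · rw [poF_eq_of_not_mem h]; rfl
  · intro e he
    by_cases h : ∃ a ∈ A.edges, b.fe a = e
    · obtain ⟨a, ha, hba⟩ := h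
      have h1 : (poF A b c (α := α) (β := β)).fe e = Sum.inr (c.fe a) := by
        rw [← hba]; exact poF_eq_of_mem_e hbinj.2 ha
      rw [h1]
      show B.mrk e = C.mrk (c.fe a)
      rw [← hc.2.2.2.2.2 a ha, ← hba, ← hb.2.2.2.2.2 a ha]
    · rw [poF_eq_of_not_mem_e h]; rfl

lemma poG_isMorphism : IsMorphism C (poD A B C b c) (poG V2 E2 V3 E3) := by
  refine ⟨fun v hv => Or.inr ⟨v, hv, rfl⟩, fun e he => Or.inr ⟨e, he, rfl⟩,
    fun e he => rfl, fun e he => rfl, fun v hv => rfl, fun e he => rfl⟩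

lemma poD_isGraph (hA : IsGraph A) (hB : IsGraph B) (hC : IsGraph C)
    (hb : IsMorphism A B b) (hc : IsMorphism A C c) (hbinj : MorInjective A b) :
    IsGraph (poD A B C b c) := by
  have hFmor := poF_isMorphism (B := B) (C := C) hA hb hc hbinj
  refine ⟨(hB.1.diff.image _).union (hC.1.image _),
    (hB.2.1.diff.image _).union (hC.2.1.image _), ?_, ?_⟩
  · rintro e (⟨d, ⟨hd, hnd⟩, rfl⟩ | ⟨d, hd, rfl⟩)
    · exact hFmor.1 _ (hB.2.2.1 d hd)
    · exact Or.inr ⟨C.src d, hC.2.2.1 d hd, rfl⟩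
  · rintro e (⟨d, ⟨hd, hnd⟩, rfl⟩ | ⟨d, hd, rfl⟩)
    · exact hFmor.1 _ (hB.2.2.2 d hd)
    · exact Or.inr ⟨C.tgt d, hC.2.2.2 d hd, rfl⟩

lemma po_comm (hbinj : MorInjective A b) :
    MorEq A (comp (poF A b c) b) (comp (poG V2 E2 V3 E3) c) := by
  constructor
  · intro a ha; exact poF_eq_of_mem hbinj.1 ha
  · intro a ha; exact poF_eq_of_mem_e hbinj.2 ha

lemma poF_inj (hbinj : MorInjective A b) (hcinj : MorInjective A c) :
    Set.InjOn (poF A b c (α := α) (β := β)).fv B.nodes ∧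
    Set.InjOn (poF A b c (α := α) (β := β)).fe B.edges := by
  constructor
  · intro x hx x' hx' heq
    by_cases h : ∃ a ∈ A.nodes, b.fv a = x <;> by_cases h' : ∃ a ∈ A.nodes, b.fv a = x'
    · obtain ⟨a, ha, rfl⟩ := h; obtain ⟨a', ha', rfl⟩ := h'
      rw [poF_eq_of_mem hbinj.1 ha, poF_eq_of_mem hbinj.1 ha'] at heq
      have : a = a' := hcinj.1 ha ha' ((Sum.inr.injEq _ _).mp heq)
      rw [this]
    · obtain ⟨a, ha, rfl⟩ := h
      rw [poF_eq_of_mem hbinj.1 ha, poF_eq_of_not_mem h'] at heq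
      exact absurd heq (by simp)
    · obtain ⟨a, ha, rfl⟩ := h'
      rw [poF_eq_of_not_mem h, poF_eq_of_mem hbinj.1 ha] at heq
      exact absurd heq (by simp)
    · rw [poF_eq_of_not_mem h, poF_eq_of_not_mem h'] at heq
      exact (Sum.inl.injEq _ _).mp heq
  · intro x hx x' hx' heq
    by_cases h : ∃ a ∈ A.edges, b.fe a = x <;> by_cases h' : ∃ a ∈ A.edges, b.fe a = x'
    · obtain ⟨a, ha, rfl⟩ := h; obtain ⟨a', ha', rfl⟩ := h'
      rw [poF_eq_of_mem_e hbinj.2 ha, poF_eq_of_mem_e hbinj.2 ha'] at heq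
      have : a = a' := hcinj.2 ha ha' ((Sum.inr.injEq _ _).mp heq)
      rw [this]
    · obtain ⟨a, ha, rfl⟩ := h
      rw [poF_eq_of_mem_e hbinj.2 ha, poF_eq_of_not_mem_e h'] at heq
      exact absurd heq (by simp)
    · obtain ⟨a, ha, rfl⟩ := h'
      rw [poF_eq_of_not_mem_e h, poF_eq_of_mem_e hbinj.2 ha] at heq
      exact absurd heq (by simp)
    · rw [poF_eq_of_not_mem_e h, poF_eq_of_not_mem_e h'] at heq
      exact (Sum.inl.injEq _ _).mp heq

lemma po_isPushout (hA : IsGraph A) (hB : IsGraph B) (hC : IsGraph C)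
    (hb : IsMorphism A B b) (hc : IsMorphism A C c)
    (hbinj : MorInjective A b) (hcinj : MorInjective A c) :
    IsPushout A B C (poD A B C b c) b c (poF A b c) (poG V2 E2 V3 E3) := by
  have hFinj := poF_inj (B := B) (α := α) (β := β) hbinj hcinj
  refine isPushout_of_data hB hC hb hc (poF_isMorphism hA hb hc hbinj) poG_isMorphism
    (po_comm hbinj) hFinj.1 hFinj.2
    (fun y hy y' hy' h => (Sum.inr.injEq _ _).mp h)
    (fun y hy y' hy' h => (Sum.inr.injEq _ _).mp h)
    id id ?_ ?_ ?_ ?_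
  · rintro z (⟨x, ⟨hx, hnx⟩, rfl⟩ | ⟨y, hy, rfl⟩)
    · exact Or.inl ⟨x, hx, rfl, poF_eq_of_not_mem (by simpa using hnx)⟩
    · exact Or.inr ⟨y, hy, rfl, rfl⟩
  · rintro z (⟨x, ⟨hx, hnx⟩, rfl⟩ | ⟨y, hy, rfl⟩)
    · exact Or.inl ⟨x, hx, rfl, poF_eq_of_not_mem_e (by simpa using hnx)⟩
    · exact Or.inr ⟨y, hy, rfl, rfl⟩
  · intro x hx y hy heq
    obtain ⟨a, ha, hba, hca⟩ := poF_inr heq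
    exact ⟨a, ha, hba, hca⟩
  · intro x hx y hy heq
    obtain ⟨a, ha, hba, hca⟩ := poF_inr_e heq
    exact ⟨a, ha, hba, hca⟩

end ExplicitPushout

section PushoutProps

variable {V1 E1 V2 E2 V3 E3 V4 E4 : Type} {α β : Type}
  {A : PreGraph V1 E1 α β} {B : PreGraph V2 E2 α β}
  {C : PreGraph V3 E3 α β} {D : PreGraph V4 E4 α β}
  {b : PreMorph V1 E1 V2 E2} {c : PreMorph V1 E1 V3 E3}
  {f : PreMorph V2 E2 V4 E4} {g : PreMorph V3 E3 V4 E4}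

/-- From an abstract pushout along injective morphisms we can extract
the usual concrete properties: `g` is injective, `f` and `g` are jointly
surjective, and the intersection of the images is exactly the image of `A`. -/
lemma pushout_props (hA : IsGraph A) (hB : IsGraph B) (hC : IsGraph C) (hD : IsGraph D)
    (hbinj : MorInjective A b) (hcinj : MorInjective A c)
    (hPO : IsPushout A B C D b c f g) :
    (Set.InjOn g.fv C.nodes ∧ Set.InjOn g.fe C.edges) ∧
    ((∀ z ∈ D.nodes, (∃ x ∈ B.nodes, f.fv x = z) ∨ ∃ y ∈ C.nodes, g.fv y = z) ∧
     (∀ z ∈ D.edges, (∃ x ∈ B.edges, f.fe x = z) ∨ ∃ y ∈ C.edges, g.fe y = z)) ∧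
    ((∀ x ∈ B.nodes, ∀ y ∈ C.nodes, f.fv x = g.fv y →
        ∃ a ∈ A.nodes, b.fv a = x ∧ c.fv a = y) ∧
     (∀ x ∈ B.edges, ∀ y ∈ C.edges, f.fe x = g.fe y →
        ∃ a ∈ A.edges, b.fe a = x ∧ c.fe a = y)) := by
  obtain ⟨hb, hc, hf, hg, hcomm, hup⟩ := hPO
  have hPOc := po_isPushout (B := B) (C := C) hA hB hC hb hc hbinj hcinj
  -- u : D → poD
  obtain ⟨u, humor, hu1, hu2, -⟩ := hup _ _ (poD A B C b c) (poF A b c) (poG V2 E2 V3 E3)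
    (poD_isGraph hA hB hC hb hc hbinj) (poF_isMorphism hA hb hc hbinj) poG_isMorphism
    (po_comm hbinj)
  -- v : poD → D
  obtain ⟨-, -, -, -, -, hupc⟩ := hPOc
  obtain ⟨v, hvmor, hv1, hv2, -⟩ := hupc _ _ D f g hD hf hg hcomm
  -- v ∘ u = id on D
  obtain ⟨u0, hu0mor, hu01, hu02, hu0uniq⟩ := hup _ _ D f g hD hf hg hcomm
  have hid : MorEq D (idMor V4 E4) u0 := hu0uniq _ (idMor_isMorphism D)
    ⟨fun x hx => rfl, fun x hx => rfl⟩ ⟨fun y hy => rfl, fun y hy => rfl⟩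
  have hvu : MorEq D (comp v u) u0 := by
    refine hu0uniq _ (comp_isMorphism humor hvmor) ⟨?_, ?_⟩ ⟨?_, ?_⟩
    · intro x hx
      show v.fv (u.fv (f.fv x)) = f.fv x
      have h := hu1.1 x hx; rw [comp_fv] at h
      have h' := hv1.1 x hx; rw [comp_fv] at h'
      rw [h]; exact h'
    · intro x hx
      show v.fe (u.fe (f.fe x)) = f.fe x
      have h := hu1.2 x hx; rw [comp_fe] at h
      have h' := hv1.2 x hx; rw [comp_fe] at h'
      rw [h]; exact h'
    · intro y hy
      show v.fv (u.fv (g.fv y)) = g.fv y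
      have h := hu2.1 y hy; rw [comp_fv] at h
      have h' := hv2.1 y hy; rw [comp_fv] at h'
      rw [h]; exact h'
    · intro y hy
      show v.fe (u.fe (g.fe y)) = g.fe y
      have h := hu2.2 y hy; rw [comp_fe] at h
      have h' := hv2.2 y hy; rw [comp_fe] at h'
      rw [h]; exact h'
  have hvuid : ∀ z ∈ D.nodes, v.fv (u.fv z) = z := by
    intro z hz
    have h1 := hvu.1 z hz; rw [comp_fv] at h1
    have h2 := hid.1 z hz
    exact h1.trans h2.symm
  have hvuide : ∀ z ∈ D.edges, v.fe (u.fe z) = z := by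
    intro z hz
    have h1 := hvu.2 z hz; rw [comp_fe] at h1
    have h2 := hid.2 z hz
    exact h1.trans h2.symm
  refine ⟨⟨?_, ?_⟩, ⟨?_, ?_⟩, ⟨?_, ?_⟩⟩
  · intro y hy y' hy' heq
    have h1 : u.fv (g.fv y) = Sum.inr y := hu2.1 y hy
    have h2 : u.fv (g.fv y') = Sum.inr y' := hu2.1 y' hy'

    rw [heq] at h1
    exact (Sum.inr.injEq _ _).mp (h1.symm.trans h2)
  · intro y hy y' hy' heq
    have h1 : u.fe (g.fe y) = Sum.inr y := hu2.2 y hy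
    have h2 : u.fe (g.fe y') = Sum.inr y' := hu2.2 y' hy'
    rw [heq] at h1
    exact (Sum.inr.injEq _ _).mp (h1.symm.trans h2)
  · intro z hz
    rcases humor.1 z hz with ⟨x, ⟨hx, hnx⟩, hxeq⟩ | ⟨y, hy, hyeq⟩
    · refine Or.inl ⟨x, hx, ?_⟩
      have : u.fv (f.fv x) = Sum.inl x := by
        have h := hu1.1 x hx; rw [comp_fv] at h
        rw [h]; exact poF_eq_of_not_mem (by simpa using hnx)
      have heq2 : u.fv (f.fv x) = u.fv z := this.trans hxeq
      calc f.fv x = v.fv (u.fv (f.fv x)) := (hvuid _ (hf.1 x hx)).symm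
        _ = v.fv (u.fv z) := by rw [heq2]
        _ = z := hvuid z hz
    · refine Or.inr ⟨y, hy, ?_⟩
      have : u.fv (g.fv y) = u.fv z := (hu2.1 y hy).trans hyeq
      calc g.fv y = v.fv (u.fv (g.fv y)) := (hvuid _ (hg.1 y hy)).symm
        _ = v.fv (u.fv z) := by rw [this]
        _ = z := hvuid z hz
  · intro z hz
    rcases humor.2.1 z hz with ⟨x, ⟨hx, hnx⟩, hxeq⟩ | ⟨y, hy, hyeq⟩
    · refine Or.inl ⟨x, hx, ?_⟩
      have : u.fe (f.fe x) = Sum.inl x := by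
        have h := hu1.2 x hx; rw [comp_fe] at h
        rw [h]; exact poF_eq_of_not_mem_e (by simpa using hnx)
      have heq2 : u.fe (f.fe x) = u.fe z := this.trans hxeq
      calc f.fe x = v.fe (u.fe (f.fe x)) := (hvuide _ (hf.2.1 x hx)).symm
        _ = v.fe (u.fe z) := by rw [heq2]
        _ = z := hvuide z hz
    · refine Or.inr ⟨y, hy, ?_⟩
      have : u.fe (g.fe y) = u.fe z := (hu2.2 y hy).trans hyeq
      calc g.fe y = v.fe (u.fe (g.fe y)) := (hvuide _ (hg.2.1 y hy)).symm
        _ = v.fe (u.fe z) := by rw [this]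
        _ = z := hvuide z hz
  · intro x hx y hy heq
    have h1 : (comp u f).fv x = (comp u g).fv y := by
      show u.fv (f.fv x) = u.fv (g.fv y); rw [heq]
    rw [hu1.1 x hx, hu2.1 y hy] at h1
    obtain ⟨a, ha, hba, hca⟩ := poF_inr h1
    exact ⟨a, ha, hba, hca⟩
  · intro x hx y hy heq
    have h1 : (comp u f).fe x = (comp u g).fe y := by
      show u.fe (f.fe x) = u.fe (g.fe y); rw [heq]
    rw [hu1.2 x hx, hu2.2 y hy] at h1
    obtain ⟨a, ha, hba, hca⟩ := poF_inr_e h1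
    exact ⟨a, ha, hba, hca⟩

/-- Canonical total comparison map from a pushout object to the explicit
pushout; used purely as a total function for junk absorption. -/
lemma pushout_can (hA : IsGraph A) (hB : IsGraph B) (hC : IsGraph C)
    (hbinj : MorInjective A b)
    (hPO : IsPushout A B C D b c f g) :
    ∃ u : PreMorph V4 E4 (V2 ⊕ V3) (E2 ⊕ E3), True := by
  obtain ⟨hb, hc, hf, hg, hcomm, hup⟩ := hPO
  obtain ⟨u, -, -, -, -⟩ := hup _ _ (poD A B C b c) (poF A b c) (poG V2 E2 V3 E3)
    (poD_isGraph hA hB hC hb hc hbinj) (poF_isMorphism hA hb hc hbinj) poG_isMorphism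
    (po_comm hbinj)
  exact ⟨u, trivial⟩

end PushoutProps

section Complement

variable {Vk Ek Vl El Vh Eh Pv Pe : Type} {α β : Type}

/-- The complement graph: the subgraph of `H` on `Cn`/`Ce`, padded with
an auxiliary pre-graph `P` of junk carrier elements. -/
def complGraph (H : PreGraph Vh Eh α β) (Cn : Set Vh) (Ce : Set Eh)
    (hs : ∀ e, e ∈ Ce → H.src e ∈ Cn) (ht : ∀ e, e ∈ Ce → H.tgt e ∈ Cn)
    (P : PreGraph Pv Pe α β) :
    PreGraph (Pv ⊕ {z // z ∈ Cn}) (Pe ⊕ {e // e ∈ Ce}) α β where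
  nodes := Set.range Sum.inr
  edges := Set.range Sum.inr
  src := Sum.elim (fun d => Sum.inl (P.src d)) (fun d => Sum.inr ⟨H.src d.1, hs d.1 d.2⟩)
  tgt := Sum.elim (fun d => Sum.inl (P.tgt d)) (fun d => Sum.inr ⟨H.tgt d.1, ht d.1 d.2⟩)
  lab := Sum.elim P.lab (fun z => H.lab z.1)
  mrk := Sum.elim P.mrk (fun d => H.mrk d.1)

/-- The morphism `K → C` into the complement graph. -/
noncomputable def complK (K : PreGraph Vk Ek α β) (bl : PreMorph Vk Ek Vl El)
    (m' : PreMorph Vl El Vh Eh) (Cn : Set Vh) (Ce : Set Eh)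
    (hkc : ∀ w ∈ K.nodes, m'.fv (bl.fv w) ∈ Cn)
    (hkce : ∀ w ∈ K.edges, m'.fe (bl.fe w) ∈ Ce)
    (ι : PreMorph Vk Ek Pv Pe) :
    PreMorph Vk Ek (Pv ⊕ {z // z ∈ Cn}) (Pe ⊕ {e // e ∈ Ce}) where
  fv w := if h : w ∈ K.nodes then Sum.inr ⟨m'.fv (bl.fv w), hkc w h⟩ else Sum.inl (ι.fv w)
  fe w := if h : w ∈ K.edges then Sum.inr ⟨m'.fe (bl.fe w), hkce w h⟩ else Sum.inl (ι.fe w)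

/-- The inclusion `C → H` of the complement graph. -/
def complH (Cn : Set Vh) (Ce : Set Eh) (padH : PreMorph Pv Pe Vh Eh) :
    PreMorph (Pv ⊕ {z // z ∈ Cn}) (Pe ⊕ {e // e ∈ Ce}) Vh Eh where
  fv := Sum.elim padH.fv Subtype.val
  fe := Sum.elim padH.fe Subtype.val

lemma complement_pushout
    {K : PreGraph Vk Ek α β} {L : PreGraph Vl El α β} {H : PreGraph Vh Eh α β}
    {bl : PreMorph Vk Ek Vl El} {m' : PreMorph Vl El Vh Eh}
    (hK : IsGraph K) (hL : IsGraph L) (hH : IsGraph H)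
    (hbl : IsMorphism K L bl)
    (hm' : IsMorphism L H m') (hm'inj : MorInjective L m')
    {Cn : Set Vh} {Ce : Set Eh}
    (hCn : Cn = H.nodes \ m'.fv '' (L.nodes \ bl.fv '' K.nodes))
    (hCe : Ce = H.edges \ m'.fe '' (L.edges \ bl.fe '' K.edges))
    (hs : ∀ e, e ∈ Ce → H.src e ∈ Cn) (ht : ∀ e, e ∈ Ce → H.tgt e ∈ Cn)
    (hkc : ∀ w ∈ K.nodes, m'.fv (bl.fv w) ∈ Cn)
    (hkce : ∀ w ∈ K.edges, m'.fe (bl.fe w) ∈ Ce)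
    (P : PreGraph Pv Pe α β) (ι : PreMorph Vk Ek Pv Pe) (padH : PreMorph Pv Pe Vh Eh)
    (Fjv : Vh → Vl ⊕ (Pv ⊕ {z // z ∈ Cn})) (Fje : Eh → El ⊕ (Pe ⊕ {e // e ∈ Ce})) :
    IsGraph (complGraph H Cn Ce hs ht P) ∧
    IsMorphism K (complGraph H Cn Ce hs ht P) (complK K bl m' Cn Ce hkc hkce ι) ∧
    IsMorphism (complGraph H Cn Ce hs ht P) H (complH Cn Ce padH) ∧
    IsPushout K L (complGraph H Cn Ce hs ht P) H bl (complK K bl m' Cn Ce hkc hkce ι)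
      m' (complH Cn Ce padH) := by
  set C := complGraph H Cn Ce hs ht P with hCdef
  set k' := complK K bl m' Cn Ce hkc hkce ι with hk'def
  set cH := complH Cn Ce padH (Pv := Pv) (Pe := Pe) with hcHdef
  have hCnsub : Cn ⊆ H.nodes := by rw [hCn]; exact Set.diff_subset
  have hCesub : Ce ⊆ H.edges := by rw [hCe]; exact Set.diff_subset
  have hCgraph : IsGraph C := by
    have hfin1 : Finite {z // z ∈ Cn} := (hH.1.subset hCnsub).to_subtype
    have hfin2 : Finite {e // e ∈ Ce} := (hH.2.1.subset hCesub).to_subtype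
    refine ⟨Set.finite_range _, Set.finite_range _, ?_, ?_⟩
    · rintro e ⟨d, rfl⟩; exact ⟨_, rfl⟩
    · rintro e ⟨d, rfl⟩; exact ⟨_, rfl⟩
  have hk'mor : IsMorphism K C k' := by
    refine ⟨?_, ?_, ?_, ?_, ?_, ?_⟩
    · intro w hw; rw [hk'def]; show (if h : w ∈ K.nodes then _ else _) ∈ C.nodes
      rw [dif_pos hw]; exact ⟨_, rfl⟩
    · intro w hw; rw [hk'def]; show (if h : w ∈ K.edges then _ else _) ∈ C.edges
      rw [dif_pos hw]; exact ⟨_, rfl⟩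
    · intro e he
      show k'.fv (K.src e) = C.src (k'.fe e)
      have h1 : k'.fe e = Sum.inr ⟨m'.fe (bl.fe e), hkce e he⟩ := dif_pos he
      have h2 : k'.fv (K.src e) = Sum.inr ⟨m'.fv (bl.fv (K.src e)), hkc _ (hK.2.2.1 e he)⟩ :=
        dif_pos (hK.2.2.1 e he)
      rw [h1, h2]
      show _ = Sum.inr (⟨H.src (m'.fe (bl.fe e)), _⟩ : {z // z ∈ Cn})
      congr 1
      apply Subtype.ext
      show m'.fv (bl.fv (K.src e)) = H.src (m'.fe (bl.fe e))
      rw [hbl.2.2.1 e he, hm'.2.2.1 _ (hbl.2.1 e he)]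
    · intro e he
      show k'.fv (K.tgt e) = C.tgt (k'.fe e)
      have h1 : k'.fe e = Sum.inr ⟨m'.fe (bl.fe e), hkce e he⟩ := dif_pos he
      have h2 : k'.fv (K.tgt e) = Sum.inr ⟨m'.fv (bl.fv (K.tgt e)), hkc _ (hK.2.2.2 e he)⟩ :=
        dif_pos (hK.2.2.2 e he)
      rw [h1, h2]
      show _ = Sum.inr (⟨H.tgt (m'.fe (bl.fe e)), _⟩ : {z // z ∈ Cn})
      congr 1
      apply Subtype.ext
      show m'.fv (bl.fv (K.tgt e)) = H.tgt (m'.fe (bl.fe e))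
      rw [hbl.2.2.2.1 e he, hm'.2.2.2.1 _ (hbl.2.1 e he)]
    · intro w hw
      have h2 : k'.fv w = Sum.inr ⟨m'.fv (bl.fv w), hkc w hw⟩ := dif_pos hw
      rw [h2]
      show K.lab w = H.lab (m'.fv (bl.fv w))
      rw [hbl.2.2.2.2.1 w hw, hm'.2.2.2.2.1 _ (hbl.1 w hw)]
    · intro w hw
      have h2 : k'.fe w = Sum.inr ⟨m'.fe (bl.fe w), hkce w hw⟩ := dif_pos hw
      rw [h2]
      show K.mrk w = H.mrk (m'.fe (bl.fe w))
      rw [hbl.2.2.2.2.2 w hw, hm'.2.2.2.2.2 _ (hbl.2.1 w hw)]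
  have hcHmor : IsMorphism C H cH := by
    refine ⟨?_, ?_, ?_, ?_, ?_, ?_⟩
    · rintro v ⟨s, rfl⟩; exact hCnsub s.2
    · rintro e ⟨d, rfl⟩; exact hCesub d.2
    · rintro e ⟨d, rfl⟩; rfl
    · rintro e ⟨d, rfl⟩; rfl
    · rintro v ⟨s, rfl⟩; rfl
    · rintro e ⟨d, rfl⟩; rfl
  have hcHinjv : Set.InjOn cH.fv C.nodes := by
    rintro x ⟨s, rfl⟩ y ⟨s', rfl⟩ heq
    exact congrArg Sum.inr (Subtype.ext heq)
  have hcHinje : Set.InjOn cH.fe C.edges := by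
    rintro x ⟨s, rfl⟩ y ⟨s', rfl⟩ heq
    exact congrArg Sum.inr (Subtype.ext heq)
  refine ⟨hCgraph, hk'mor, hcHmor, ?_⟩
  refine isPushout_of_data hL hCgraph hbl hk'mor hm' hcHmor ?_
    hm'inj.1 hm'inj.2 hcHinjv hcHinje
    (fun z => if h : z ∈ Cn then Sum.inr (Sum.inr ⟨z, h⟩)
      else if h2 : ∃ v ∈ L.nodes, m'.fv v = z then Sum.inl h2.choose else Fjv z)
    (fun z => if h : z ∈ Ce then Sum.inr (Sum.inr ⟨z, h⟩)
      else if h2 : ∃ v ∈ L.edges, m'.fe v = z then Sum.inl h2.choose else Fje z)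
    ?_ ?_ ?_ ?_
  · constructor
    · intro w hw
      show m'.fv (bl.fv w) = cH.fv (k'.fv w)
      rw [show k'.fv w = Sum.inr ⟨m'.fv (bl.fv w), hkc w hw⟩ from dif_pos hw]
      rfl
    · intro w hw
      show m'.fe (bl.fe w) = cH.fe (k'.fe w)
      rw [show k'.fe w = Sum.inr ⟨m'.fe (bl.fe w), hkce w hw⟩ from dif_pos hw]
      rfl
  · intro z hz
    by_cases h : z ∈ Cn
    · refine Or.inr ⟨Sum.inr ⟨z, h⟩, ⟨_, rfl⟩, dif_pos h, rfl⟩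
    · have hz2 : z ∈ m'.fv '' (L.nodes \ bl.fv '' K.nodes) := by
        by_contra hc
        exact h (hCn ▸ ⟨hz, hc⟩)
      obtain ⟨v, ⟨hv, -⟩, hveq⟩ := hz2
      have h2 : ∃ v ∈ L.nodes, m'.fv v = z := ⟨v, hv, hveq⟩
      refine Or.inl ⟨h2.choose, h2.choose_spec.1, ?_, h2.choose_spec.2⟩
      show (if h : z ∈ Cn then _ else if h2 : ∃ v ∈ L.nodes, m'.fv v = z then _ else Fjv z) = _
      rw [dif_neg h, dif_pos h2]
  · intro z hz
    by_cases h : z ∈ Ce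
    · refine Or.inr ⟨Sum.inr ⟨z, h⟩, ⟨_, rfl⟩, dif_pos h, rfl⟩
    · have hz2 : z ∈ m'.fe '' (L.edges \ bl.fe '' K.edges) := by
        by_contra hc
        exact h (hCe ▸ ⟨hz, hc⟩)
      obtain ⟨v, ⟨hv, -⟩, hveq⟩ := hz2
      have h2 : ∃ v ∈ L.edges, m'.fe v = z := ⟨v, hv, hveq⟩
      refine Or.inl ⟨h2.choose, h2.choose_spec.1, ?_, h2.choose_spec.2⟩
      show (if h : z ∈ Ce then _ else if h2 : ∃ v ∈ L.edges, m'.fe v = z then _ else Fje z) = _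
      rw [dif_neg h, dif_pos h2]
  · rintro x hx y ⟨s, rfl⟩ heq
    have hs1 : s.1 = m'.fv x := heq.symm
    have hxK : x ∈ bl.fv '' K.nodes := by
      by_contra hc
      have : s.1 ∈ m'.fv '' (L.nodes \ bl.fv '' K.nodes) := ⟨x, ⟨hx, hc⟩, hs1.symm⟩
      have hmem : (s : Vh) ∈ H.nodes \ m'.fv '' (L.nodes \ bl.fv '' K.nodes) := by
        rw [← hCn]; exact s.2
      exact hmem.2 this
    obtain ⟨a, ha, hba⟩ := hxK
    refine ⟨a, ha, hba, ?_⟩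
    rw [show k'.fv a = Sum.inr ⟨m'.fv (bl.fv a), hkc a ha⟩ from dif_pos ha]
    congr 1
    apply Subtype.ext
    show m'.fv (bl.fv a) = s.1
    rw [hba, hs1]
  · rintro x hx y ⟨s, rfl⟩ heq
    have hs1 : s.1 = m'.fe x := heq.symm
    have hxK : x ∈ bl.fe '' K.edges := by
      by_contra hc
      have : s.1 ∈ m'.fe '' (L.edges \ bl.fe '' K.edges) := ⟨x, ⟨hx, hc⟩, hs1.symm⟩
      have hmem : (s : Eh) ∈ H.edges \ m'.fe '' (L.edges \ bl.fe '' K.edges) := by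
        rw [← hCe]; exact s.2
      exact hmem.2 this
    obtain ⟨a, ha, hba⟩ := hxK
    refine ⟨a, ha, hba, ?_⟩
    rw [show k'.fe a = Sum.inr ⟨m'.fe (bl.fe a), hkce a ha⟩ from dif_pos ha]
    congr 1
    apply Subtype.ext
    show m'.fe (bl.fe a) = s.1
    rw [hba, hs1]

end Complement
/-- Church-Rosser theorem. Parallel independent direct
derivations can be completed to a common graph `G'` by sequentially
independent direct derivations. -/
theorem church_rosser
    {Vl1 El1 Vk1 Ek1 Vr1 Er1 Vl2 El2 Vk2 Ek2 Vr2 Er2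
     Vg Eg Vd1 Ed1 Vh1 Eh1 Vd2 Ed2 Vh2 Eh2 α β : Type}
    (L1 : PreGraph Vl1 El1 α β) (K1 : PreGraph Vk1 Ek1 α β)
    (R1 : PreGraph Vr1 Er1 α β)
    (L2 : PreGraph Vl2 El2 α β) (K2 : PreGraph Vk2 Ek2 α β)
    (R2 : PreGraph Vr2 Er2 α β)
    (G : PreGraph Vg Eg α β)
    (D1 : PreGraph Vd1 Ed1 α β) (H1 : PreGraph Vh1 Eh1 α β)
    (D2 : PreGraph Vd2 Ed2 α β) (H2 : PreGraph Vh2 Eh2 α β)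
    (bl1 : PreMorph Vk1 Ek1 Vl1 El1) (br1 : PreMorph Vk1 Ek1 Vr1 Er1)
    (bl2 : PreMorph Vk2 Ek2 Vl2 El2) (br2 : PreMorph Vk2 Ek2 Vr2 Er2)
    (m1 : PreMorph Vl1 El1 Vg Eg) (k1 : PreMorph Vk1 Ek1 Vd1 Ed1)
    (d1G : PreMorph Vd1 Ed1 Vg Eg) (d1H : PreMorph Vd1 Ed1 Vh1 Eh1)
    (r1 : PreMorph Vr1 Er1 Vh1 Eh1)
    (m2 : PreMorph Vl2 El2 Vg Eg) (k2 : PreMorph Vk2 Ek2 Vd2 Ed2)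
    (d2G : PreMorph Vd2 Ed2 Vg Eg) (d2H : PreMorph Vd2 Ed2 Vh2 Eh2)
    (r2 : PreMorph Vr2 Er2 Vh2 Eh2)
    (hL1 : IsGraph L1) (hK1 : IsGraph K1) (hR1 : IsGraph R1)
    (hL2 : IsGraph L2) (hK2 : IsGraph K2) (hR2 : IsGraph R2)
    (hG : IsGraph G) (hD1 : IsGraph D1) (hH1 : IsGraph H1)
    (hD2 : IsGraph D2) (hH2 : IsGraph H2)
    (hbl1 : MorInjective K1 bl1) (hbr1 : MorInjective K1 br1)
    (hbl2 : MorInjective K2 bl2) (hbr2 : MorInjective K2 br2)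
    (hm1 : MorInjective L1 m1) (hm2 : MorInjective L2 m2)
    (dd1 : IsDirectDerivation L1 K1 R1 G D1 H1 bl1 br1 m1 k1 d1G d1H r1)
    (dd2 : IsDirectDerivation L2 K2 R2 G D2 H2 bl2 br2 m2 k2 d2G d2H r2)
    -- parallel independence
    (hpi : ∃ (j1 : PreMorph Vl1 El1 Vd2 Ed2) (j2 : PreMorph Vl2 El2 Vd1 Ed1),
        IsMorphism L1 D2 j1 ∧ IsMorphism L2 D1 j2 ∧
        MorEq L1 (comp d2G j1) m1 ∧ MorEq L2 (comp d1G j2) m2) :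
    ∃ (Vg' Eg' Vc1 Ec1 Vc2 Ec2 : Type)
      (G' : PreGraph Vg' Eg' α β)
      (C2 : PreGraph Vc2 Ec2 α β) (C1 : PreGraph Vc1 Ec1 α β)
      (m2' : PreMorph Vl2 El2 Vh1 Eh1) (k2' : PreMorph Vk2 Ek2 Vc2 Ec2)
      (c2H : PreMorph Vc2 Ec2 Vh1 Eh1) (c2G : PreMorph Vc2 Ec2 Vg' Eg')
      (r2' : PreMorph Vr2 Er2 Vg' Eg')
      (m1' : PreMorph Vl1 El1 Vh2 Eh2) (k1' : PreMorph Vk1 Ek1 Vc1 Ec1)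
      (c1H : PreMorph Vc1 Ec1 Vh2 Eh2) (c1G : PreMorph Vc1 Ec1 Vg' Eg')
      (r1' : PreMorph Vr1 Er1 Vg' Eg'),
      IsGraph G' ∧ IsGraph C1 ∧ IsGraph C2 ∧
      MorInjective L2 m2' ∧ MorInjective L1 m1' ∧
      IsDirectDerivation L2 K2 R2 H1 C2 G' bl2 br2 m2' k2' c2H c2G r2' ∧
      IsDirectDerivation L1 K1 R1 H2 C1 G' bl1 br1 m1' k1' c1H c1G r1' ∧
      -- sequential independence of G ⇒_{p1,m1} H1 ⇒_{p2,m2'} G'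
      (∃ (s1 : PreMorph Vr1 Er1 Vc2 Ec2) (s2 : PreMorph Vl2 El2 Vd1 Ed1),
        IsMorphism R1 C2 s1 ∧ IsMorphism L2 D1 s2 ∧
        MorEq R1 (comp c2H s1) r1 ∧ MorEq L2 (comp d1H s2) m2') ∧
      -- sequential independence of G ⇒_{p2,m2} H2 ⇒_{p1,m1'} G'
      (∃ (s1 : PreMorph Vr2 Er2 Vc1 Ec1) (s2 : PreMorph Vl1 El1 Vd2 Ed2),
        IsMorphism R2 C1 s1 ∧ IsMorphism L1 D2 s2 ∧
        MorEq R2 (comp c1H s1) r2 ∧ MorEq L1 (comp d2H s2) m1') := by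
    classical
  obtain ⟨dd1a, dd1b⟩ := dd1
  obtain ⟨dd2a, dd2b⟩ := dd2
  obtain ⟨j1, j2, hj1mor, hj2mor, hj1eq, hj2eq⟩ := hpi
  -- morphism components
  have hbl1m : IsMorphism K1 L1 bl1 := dd1a.1
  have hk1m : IsMorphism K1 D1 k1 := dd1a.2.1
  have hm1m : IsMorphism L1 G m1 := dd1a.2.2.1
  have hd1Gm : IsMorphism D1 G d1G := dd1a.2.2.2.1
  have hbr1m : IsMorphism K1 R1 br1 := dd1b.1
  have hr1m : IsMorphism R1 H1 r1 := dd1b.2.2.1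
  have hd1Hm : IsMorphism D1 H1 d1H := dd1b.2.2.2.1
  have hbl2m : IsMorphism K2 L2 bl2 := dd2a.1
  have hk2m : IsMorphism K2 D2 k2 := dd2a.2.1
  have hm2m : IsMorphism L2 G m2 := dd2a.2.2.1
  have hd2Gm : IsMorphism D2 G d2G := dd2a.2.2.2.1
  have hbr2m : IsMorphism K2 R2 br2 := dd2b.1
  have hr2m : IsMorphism R2 H2 r2 := dd2b.2.2.1
  have hd2Hm : IsMorphism D2 H2 d2H := dd2b.2.2.2.1
  -- pointwise commutation facts
  have hcm1a : ∀ w ∈ K1.nodes, m1.fv (bl1.fv w) = d1G.fv (k1.fv w) :=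
    fun w hw => dd1a.2.2.2.2.1.1 w hw
  have hcm1ae : ∀ w ∈ K1.edges, m1.fe (bl1.fe w) = d1G.fe (k1.fe w) :=
    fun w hw => dd1a.2.2.2.2.1.2 w hw
  have hcm1b : ∀ w ∈ K1.nodes, r1.fv (br1.fv w) = d1H.fv (k1.fv w) :=
    fun w hw => dd1b.2.2.2.2.1.1 w hw
  have hcm1be : ∀ w ∈ K1.edges, r1.fe (br1.fe w) = d1H.fe (k1.fe w) :=
    fun w hw => dd1b.2.2.2.2.1.2 w hw
  have hcm2a : ∀ w ∈ K2.nodes, m2.fv (bl2.fv w) = d2G.fv (k2.fv w) :=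
    fun w hw => dd2a.2.2.2.2.1.1 w hw
  have hcm2ae : ∀ w ∈ K2.edges, m2.fe (bl2.fe w) = d2G.fe (k2.fe w) :=
    fun w hw => dd2a.2.2.2.2.1.2 w hw
  have hcm2b : ∀ w ∈ K2.nodes, r2.fv (br2.fv w) = d2H.fv (k2.fv w) :=
    fun w hw => dd2b.2.2.2.2.1.1 w hw
  have hcm2be : ∀ w ∈ K2.edges, r2.fe (br2.fe w) = d2H.fe (k2.fe w) :=
    fun w hw => dd2b.2.2.2.2.1.2 w hw
  have hj1G : ∀ v ∈ L1.nodes, d2G.fv (j1.fv v) = m1.fv v := fun v hv => hj1eq.1 v hv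
  have hj1Ge : ∀ v ∈ L1.edges, d2G.fe (j1.fe v) = m1.fe v := fun v hv => hj1eq.2 v hv
  have hj2G : ∀ v ∈ L2.nodes, d1G.fv (j2.fv v) = m2.fv v := fun v hv => hj2eq.1 v hv
  have hj2Ge : ∀ v ∈ L2.edges, d1G.fe (j2.fe v) = m2.fe v := fun v hv => hj2eq.2 v hv
  -- injectivity of k1, k2
  have hk1inj : MorInjective K1 k1 := by
    constructor
    · intro x hx y hy heq
      have h1 := hcm1a x hx
      have h2 := hcm1a y hy
      have : m1.fv (bl1.fv x) = m1.fv (bl1.fv y) := by rw [h1, h2, heq]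
      exact hbl1.1 hx hy (hm1.1 (hbl1m.1 x hx) (hbl1m.1 y hy) this)
    · intro x hx y hy heq
      have h1 := hcm1ae x hx
      have h2 := hcm1ae y hy
      have : m1.fe (bl1.fe x) = m1.fe (bl1.fe y) := by rw [h1, h2, heq]
      exact hbl1.2 hx hy (hm1.2 (hbl1m.2.1 x hx) (hbl1m.2.1 y hy) this)
  have hk2inj : MorInjective K2 k2 := by
    constructor
    · intro x hx y hy heq
      have h1 := hcm2a x hx
      have h2 := hcm2a y hy
      have : m2.fv (bl2.fv x) = m2.fv (bl2.fv y) := by rw [h1, h2, heq]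
      exact hbl2.1 hx hy (hm2.1 (hbl2m.1 x hx) (hbl2m.1 y hy) this)
    · intro x hx y hy heq
      have h1 := hcm2ae x hx
      have h2 := hcm2ae y hy
      have : m2.fe (bl2.fe x) = m2.fe (bl2.fe y) := by rw [h1, h2, heq]
      exact hbl2.2 hx hy (hm2.2 (hbl2m.2.1 x hx) (hbl2m.2.1 y hy) this)
  -- concrete pushout properties
  obtain ⟨⟨hd1Ginjv, hd1Ginje⟩, ⟨hcovG1v, hcovG1e⟩, ⟨hintG1v, hintG1e⟩⟩ :=
    pushout_props hK1 hL1 hD1 hG hbl1 hk1inj dd1a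
  obtain ⟨⟨hd1Hinjv, hd1Hinje⟩, ⟨hcovH1v, hcovH1e⟩, ⟨hintH1v, hintH1e⟩⟩ :=
    pushout_props hK1 hR1 hD1 hH1 hbr1 hk1inj dd1b
  obtain ⟨⟨hr1injv, hr1inje⟩, -, -⟩ :=
    pushout_props hK1 hD1 hR1 hH1 hk1inj hbr1 dd1b.symmPO
  obtain ⟨⟨hd2Ginjv, hd2Ginje⟩, ⟨hcovG2v, hcovG2e⟩, ⟨hintG2v, hintG2e⟩⟩ :=
    pushout_props hK2 hL2 hD2 hG hbl2 hk2inj dd2a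
  obtain ⟨⟨hd2Hinjv, hd2Hinje⟩, ⟨hcovH2v, hcovH2e⟩, ⟨hintH2v, hintH2e⟩⟩ :=
    pushout_props hK2 hR2 hD2 hH2 hbr2 hk2inj dd2b
  obtain ⟨⟨hr2injv, hr2inje⟩, -, -⟩ :=
    pushout_props hK2 hD2 hR2 hH2 hk2inj hbr2 dd2b.symmPO
  -- canonical total comparison maps (used only for junk absorption)
  obtain ⟨can1, -⟩ := pushout_can hK1 hR1 hD1 hbr1 dd1b
  obtain ⟨can2, -⟩ := pushout_can hK2 hR2 hD2 hbr2 dd2b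
  obtain ⟨canG1, -⟩ := pushout_can hK1 hL1 hD1 hbl1 dd1a
  obtain ⟨canG2, -⟩ := pushout_can hK2 hL2 hD2 hbl2 dd2a
  -- the shifted matches
  set m2' : PreMorph Vl2 El2 Vh1 Eh1 := comp d1H j2 with hm2'def
  set m1' : PreMorph Vl1 El1 Vh2 Eh2 := comp d2H j1 with hm1'def
  have hm2'mor : IsMorphism L2 H1 m2' := comp_isMorphism hj2mor hd1Hm
  have hm1'mor : IsMorphism L1 H2 m1' := comp_isMorphism hj1mor hd2Hm
  have hm2'inj : MorInjective L2 m2' := by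
    constructor
    · intro x hx y hy heq
      have h : d1H.fv (j2.fv x) = d1H.fv (j2.fv y) := heq
      have h2 : j2.fv x = j2.fv y := hd1Hinjv (hj2mor.1 x hx) (hj2mor.1 y hy) h
      have h3 : m2.fv x = m2.fv y := by rw [← hj2G x hx, ← hj2G y hy, h2]
      exact hm2.1 hx hy h3
    · intro x hx y hy heq
      have h : d1H.fe (j2.fe x) = d1H.fe (j2.fe y) := heq
      have h2 : j2.fe x = j2.fe y := hd1Hinje (hj2mor.2.1 x hx) (hj2mor.2.1 y hy) h
      have h3 : m2.fe x = m2.fe y := by rw [← hj2Ge x hx, ← hj2Ge y hy, h2]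
      exact hm2.2 hx hy h3
  have hm1'inj : MorInjective L1 m1' := by
    constructor
    · intro x hx y hy heq
      have h : d2H.fv (j1.fv x) = d2H.fv (j1.fv y) := heq
      have h2 : j1.fv x = j1.fv y := hd2Hinjv (hj1mor.1 x hx) (hj1mor.1 y hy) h
      have h3 : m1.fv x = m1.fv y := by rw [← hj1G x hx, ← hj1G y hy, h2]
      exact hm1.1 hx hy h3
    · intro x hx y hy heq
      have h : d2H.fe (j1.fe x) = d2H.fe (j1.fe y) := heq
      have h2 : j1.fe x = j1.fe y := hd2Hinje (hj1mor.2.1 x hx) (hj1mor.2.1 y hy) h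
      have h3 : m1.fe x = m1.fe y := by rw [← hj1Ge x hx, ← hj1Ge y hy, h2]
      exact hm1.2 hx hy h3
  -- the node/edge sets of the complement contexts
  set C2n : Set Vh1 := H1.nodes \ m2'.fv '' (L2.nodes \ bl2.fv '' K2.nodes) with hC2n
  set C2e : Set Eh1 := H1.edges \ m2'.fe '' (L2.edges \ bl2.fe '' K2.edges) with hC2e
  set C1n : Set Vh2 := H2.nodes \ m1'.fv '' (L1.nodes \ bl1.fv '' K1.nodes) with hC1n
  set C1e : Set Eh2 := H2.edges \ m1'.fe '' (L1.edges \ bl1.fe '' K1.edges) with hC1e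
  -- r1 avoids the deleted part of H1
  have hravoid1v : ∀ w ∈ R1.nodes, r1.fv w ∈ C2n := by
    intro w hw
    refine ⟨hr1m.1 w hw, ?_⟩
    rintro ⟨v, ⟨hv, hnv⟩, heq⟩
    have h1 : r1.fv w = d1H.fv (j2.fv v) := heq.symm
    obtain ⟨a, ha, hba, hka⟩ := hintH1v w hw (j2.fv v) (hj2mor.1 v hv) h1
    have h2 : m2.fv v = d2G.fv (j1.fv (bl1.fv a)) := by
      rw [← hj2G v hv, ← hka, ← hcm1a a ha, ← hj1G _ (hbl1m.1 a ha)]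
    obtain ⟨a2, ha2, hba2, -⟩ := hintG2v v hv (j1.fv (bl1.fv a)) (hj1mor.1 _ (hbl1m.1 a ha)) h2
    exact hnv ⟨a2, ha2, hba2⟩
  have hravoid1e : ∀ w ∈ R1.edges, r1.fe w ∈ C2e := by
    intro w hw
    refine ⟨hr1m.2.1 w hw, ?_⟩
    rintro ⟨v, ⟨hv, hnv⟩, heq⟩
    have h1 : r1.fe w = d1H.fe (j2.fe v) := heq.symm
    obtain ⟨a, ha, hba, hka⟩ := hintH1e w hw (j2.fe v) (hj2mor.2.1 v hv) h1
    have h2 : m2.fe v = d2G.fe (j1.fe (bl1.fe a)) := by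
      rw [← hj2Ge v hv, ← hka, ← hcm1ae a ha, ← hj1Ge _ (hbl1m.2.1 a ha)]
    obtain ⟨a2, ha2, hba2, -⟩ := hintG2e v hv (j1.fe (bl1.fe a)) (hj1mor.2.1 _ (hbl1m.2.1 a ha)) h2
    exact hnv ⟨a2, ha2, hba2⟩
  have hravoid2v : ∀ w ∈ R2.nodes, r2.fv w ∈ C1n := by
    intro w hw
    refine ⟨hr2m.1 w hw, ?_⟩
    rintro ⟨v, ⟨hv, hnv⟩, heq⟩
    have h1 : r2.fv w = d2H.fv (j1.fv v) := heq.symm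
    obtain ⟨a, ha, hba, hka⟩ := hintH2v w hw (j1.fv v) (hj1mor.1 v hv) h1
    have h2 : m1.fv v = d1G.fv (j2.fv (bl2.fv a)) := by
      rw [← hj1G v hv, ← hka, ← hcm2a a ha, ← hj2G _ (hbl2m.1 a ha)]
    obtain ⟨a2, ha2, hba2, -⟩ := hintG1v v hv (j2.fv (bl2.fv a)) (hj2mor.1 _ (hbl2m.1 a ha)) h2
    exact hnv ⟨a2, ha2, hba2⟩
  have hravoid2e : ∀ w ∈ R2.edges, r2.fe w ∈ C1e := by
    intro w hw
    refine ⟨hr2m.2.1 w hw, ?_⟩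
    rintro ⟨v, ⟨hv, hnv⟩, heq⟩
    have h1 : r2.fe w = d2H.fe (j1.fe v) := heq.symm
    obtain ⟨a, ha, hba, hka⟩ := hintH2e w hw (j1.fe v) (hj1mor.2.1 v hv) h1
    have h2 : m1.fe v = d1G.fe (j2.fe (bl2.fe a)) := by
      rw [← hj1Ge v hv, ← hka, ← hcm2ae a ha, ← hj2Ge _ (hbl2m.2.1 a ha)]
    obtain ⟨a2, ha2, hba2, -⟩ := hintG1e v hv (j2.fe (bl2.fe a)) (hj2mor.2.1 _ (hbl2m.2.1 a ha)) h2
    exact hnv ⟨a2, ha2, hba2⟩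
  -- untouched context elements survive
  have hsurv1v : ∀ y ∈ D1.nodes,
      (∀ v, v ∈ L2.nodes → v ∉ bl2.fv '' K2.nodes → j2.fv v ≠ y) → d1H.fv y ∈ C2n := by
    intro y hy hnot
    refine ⟨hd1Hm.1 y hy, ?_⟩
    rintro ⟨v, ⟨hv, hnv⟩, heq⟩
    have h1 : j2.fv v = y := hd1Hinjv (hj2mor.1 v hv) hy heq
    exact hnot v hv hnv h1
  have hsurv1e : ∀ y ∈ D1.edges,
      (∀ v, v ∈ L2.edges → v ∉ bl2.fe '' K2.edges → j2.fe v ≠ y) → d1H.fe y ∈ C2e := by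
    intro y hy hnot
    refine ⟨hd1Hm.2.1 y hy, ?_⟩
    rintro ⟨v, ⟨hv, hnv⟩, heq⟩
    have h1 : j2.fe v = y := hd1Hinje (hj2mor.2.1 v hv) hy heq
    exact hnot v hv hnv h1
  have hsurv2v : ∀ y ∈ D2.nodes,
      (∀ v, v ∈ L1.nodes → v ∉ bl1.fv '' K1.nodes → j1.fv v ≠ y) → d2H.fv y ∈ C1n := by
    intro y hy hnot
    refine ⟨hd2Hm.1 y hy, ?_⟩
    rintro ⟨v, ⟨hv, hnv⟩, heq⟩
    have h1 : j1.fv v = y := hd2Hinjv (hj1mor.1 v hv) hy heq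
    exact hnot v hv hnv h1
  have hsurv2e : ∀ y ∈ D2.edges,
      (∀ v, v ∈ L1.edges → v ∉ bl1.fe '' K1.edges → j1.fe v ≠ y) → d2H.fe y ∈ C1e := by
    intro y hy hnot
    refine ⟨hd2Hm.2.1 y hy, ?_⟩
    rintro ⟨v, ⟨hv, hnv⟩, heq⟩
    have h1 : j1.fe v = y := hd2Hinje (hj1mor.2.1 v hv) hy heq
    exact hnot v hv hnv h1
  -- dangling condition for C2
  have hdangle1s : ∀ e, e ∈ C2e → H1.src e ∈ C2n := by
    intro e he
    obtain ⟨heH, hnd⟩ := he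
    rcases hcovH1e e heH with ⟨re, hre, hreq⟩ | ⟨d, hd, hdeq⟩
    · rw [← hreq, ← hr1m.2.2.1 re hre]
      exact hravoid1v _ (hR1.2.2.1 re hre)
    · rw [← hdeq, ← hd1Hm.2.2.1 d hd]
      apply hsurv1v _ (hD1.2.2.1 d hd)
      intro v hv hnv hjv
      have hGe : d1G.fe d ∈ G.edges := hd1Gm.2.1 d hd
      have hGsrc : G.src (d1G.fe d) = m2.fv v := by
        rw [← hd1Gm.2.2.1 d hd, ← hjv, hj2G v hv]
      rcases hcovG2e (d1G.fe d) hGe with ⟨le, hle, hleq⟩ | ⟨de, hde, hdeeq⟩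
      · have hdle : d = j2.fe le :=
          (hd1Ginje (hj2mor.2.1 le hle) hd (by rw [hj2Ge le hle, hleq])).symm
        by_cases hbl : le ∈ bl2.fe '' K2.edges
        · obtain ⟨we, hwe, hweq⟩ := hbl
          have hsrc_eq : m2.fv (L2.src le) = m2.fv v := by
            rw [hm2m.2.2.1 le hle, hleq, hGsrc]
          have hveq : L2.src le = v := hm2.1 (hL2.2.2.1 le hle) hv hsrc_eq
          apply hnv
          refine ⟨K2.src we, hK2.2.2.1 we hwe, ?_⟩
          rw [hbl2m.2.2.1 we hwe, hweq, hveq]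
        · apply hnd
          refine ⟨le, ⟨hle, hbl⟩, ?_⟩
          show d1H.fe (j2.fe le) = e
          rw [← hdle, hdeq]
      · have h2 : m2.fv v = d2G.fv (D2.src de) := by
          rw [← hGsrc, ← hdeeq, hd2Gm.2.2.1 de hde]
        obtain ⟨a2, ha2, hba2, -⟩ := hintG2v v hv _ (hD2.2.2.1 de hde) h2
        exact hnv ⟨a2, ha2, hba2⟩
  have hdangle1t : ∀ e, e ∈ C2e → H1.tgt e ∈ C2n := by
    intro e he
    obtain ⟨heH, hnd⟩ := he
    rcases hcovH1e e heH with ⟨re, hre, hreq⟩ | ⟨d, hd, hdeq⟩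
    · rw [← hreq, ← hr1m.2.2.2.1 re hre]
      exact hravoid1v _ (hR1.2.2.2 re hre)
    · rw [← hdeq, ← hd1Hm.2.2.2.1 d hd]
      apply hsurv1v _ (hD1.2.2.2 d hd)
      intro v hv hnv hjv
      have hGe : d1G.fe d ∈ G.edges := hd1Gm.2.1 d hd
      have hGsrc : G.tgt (d1G.fe d) = m2.fv v := by
        rw [← hd1Gm.2.2.2.1 d hd, ← hjv, hj2G v hv]
      rcases hcovG2e (d1G.fe d) hGe with ⟨le, hle, hleq⟩ | ⟨de, hde, hdeeq⟩
      · have hdle : d = j2.fe le :=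
          (hd1Ginje (hj2mor.2.1 le hle) hd (by rw [hj2Ge le hle, hleq])).symm
        by_cases hbl : le ∈ bl2.fe '' K2.edges
        · obtain ⟨we, hwe, hweq⟩ := hbl
          have hsrc_eq : m2.fv (L2.tgt le) = m2.fv v := by
            rw [hm2m.2.2.2.1 le hle, hleq, hGsrc]
          have hveq : L2.tgt le = v := hm2.1 (hL2.2.2.2 le hle) hv hsrc_eq
          apply hnv
          refine ⟨K2.tgt we, hK2.2.2.2 we hwe, ?_⟩
          rw [hbl2m.2.2.2.1 we hwe, hweq, hveq]
        · apply hnd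
          refine ⟨le, ⟨hle, hbl⟩, ?_⟩
          show d1H.fe (j2.fe le) = e
          rw [← hdle, hdeq]
      · have h2 : m2.fv v = d2G.fv (D2.tgt de) := by
          rw [← hGsrc, ← hdeeq, hd2Gm.2.2.2.1 de hde]
        obtain ⟨a2, ha2, hba2, -⟩ := hintG2v v hv _ (hD2.2.2.2 de hde) h2
        exact hnv ⟨a2, ha2, hba2⟩
  -- dangling condition for C1
  have hdangle2s : ∀ e, e ∈ C1e → H2.src e ∈ C1n := by
    intro e he
    obtain ⟨heH, hnd⟩ := he
    rcases hcovH2e e heH with ⟨re, hre, hreq⟩ | ⟨d, hd, hdeq⟩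
    · rw [← hreq, ← hr2m.2.2.1 re hre]
      exact hravoid2v _ (hR2.2.2.1 re hre)
    · rw [← hdeq, ← hd2Hm.2.2.1 d hd]
      apply hsurv2v _ (hD2.2.2.1 d hd)
      intro v hv hnv hjv
      have hGe : d2G.fe d ∈ G.edges := hd2Gm.2.1 d hd
      have hGsrc : G.src (d2G.fe d) = m1.fv v := by
        rw [← hd2Gm.2.2.1 d hd, ← hjv, hj1G v hv]
      rcases hcovG1e (d2G.fe d) hGe with ⟨le, hle, hleq⟩ | ⟨de, hde, hdeeq⟩
      · have hdle : d = j1.fe le :=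
          (hd2Ginje (hj1mor.2.1 le hle) hd (by rw [hj1Ge le hle, hleq])).symm
        by_cases hbl : le ∈ bl1.fe '' K1.edges
        · obtain ⟨we, hwe, hweq⟩ := hbl
          have hsrc_eq : m1.fv (L1.src le) = m1.fv v := by
            rw [hm1m.2.2.1 le hle, hleq, hGsrc]
          have hveq : L1.src le = v := hm1.1 (hL1.2.2.1 le hle) hv hsrc_eq
          apply hnv
          refine ⟨K1.src we, hK1.2.2.1 we hwe, ?_⟩
          rw [hbl1m.2.2.1 we hwe, hweq, hveq]
        · apply hnd
          refine ⟨le, ⟨hle, hbl⟩, ?_⟩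
          show d2H.fe (j1.fe le) = e
          rw [← hdle, hdeq]
      · have h2 : m1.fv v = d1G.fv (D1.src de) := by
          rw [← hGsrc, ← hdeeq, hd1Gm.2.2.1 de hde]
        obtain ⟨a2, ha2, hba2, -⟩ := hintG1v v hv _ (hD1.2.2.1 de hde) h2
        exact hnv ⟨a2, ha2, hba2⟩
  have hdangle2t : ∀ e, e ∈ C1e → H2.tgt e ∈ C1n := by
    intro e he
    obtain ⟨heH, hnd⟩ := he
    rcases hcovH2e e heH with ⟨re, hre, hreq⟩ | ⟨d, hd, hdeq⟩
    · rw [← hreq, ← hr2m.2.2.2.1 re hre]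
      exact hravoid2v _ (hR2.2.2.2 re hre)
    · rw [← hdeq, ← hd2Hm.2.2.2.1 d hd]
      apply hsurv2v _ (hD2.2.2.2 d hd)
      intro v hv hnv hjv
      have hGe : d2G.fe d ∈ G.edges := hd2Gm.2.1 d hd
      have hGsrc : G.tgt (d2G.fe d) = m1.fv v := by
        rw [← hd2Gm.2.2.2.1 d hd, ← hjv, hj1G v hv]
      rcases hcovG1e (d2G.fe d) hGe with ⟨le, hle, hleq⟩ | ⟨de, hde, hdeeq⟩
      · have hdle : d = j1.fe le :=
          (hd2Ginje (hj1mor.2.1 le hle) hd (by rw [hj1Ge le hle, hleq])).symm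
        by_cases hbl : le ∈ bl1.fe '' K1.edges
        · obtain ⟨we, hwe, hweq⟩ := hbl
          have hsrc_eq : m1.fv (L1.tgt le) = m1.fv v := by
            rw [hm1m.2.2.2.1 le hle, hleq, hGsrc]
          have hveq : L1.tgt le = v := hm1.1 (hL1.2.2.2 le hle) hv hsrc_eq
          apply hnv
          refine ⟨K1.tgt we, hK1.2.2.2 we hwe, ?_⟩
          rw [hbl1m.2.2.2.1 we hwe, hweq, hveq]
        · apply hnd
          refine ⟨le, ⟨hle, hbl⟩, ?_⟩
          show d2H.fe (j1.fe le) = e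
          rw [← hdle, hdeq]
      · have h2 : m1.fv v = d1G.fv (D1.tgt de) := by
          rw [← hGsrc, ← hdeeq, hd1Gm.2.2.2.1 de hde]
        obtain ⟨a2, ha2, hba2, -⟩ := hintG1v v hv _ (hD1.2.2.2 de hde) h2
        exact hnv ⟨a2, ha2, hba2⟩
  -- the interface lives in the complements
  have hkc2v : ∀ w ∈ K2.nodes, m2'.fv (bl2.fv w) ∈ C2n := by
    intro w hw
    refine ⟨hm2'mor.1 _ (hbl2m.1 w hw), ?_⟩
    rintro ⟨v, ⟨hv, hnv⟩, heq⟩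
    have h1 : v = bl2.fv w := hm2'inj.1 hv (hbl2m.1 w hw) heq
    exact hnv ⟨w, hw, h1.symm⟩
  have hkc2e : ∀ w ∈ K2.edges, m2'.fe (bl2.fe w) ∈ C2e := by
    intro w hw
    refine ⟨hm2'mor.2.1 _ (hbl2m.2.1 w hw), ?_⟩
    rintro ⟨v, ⟨hv, hnv⟩, heq⟩
    have h1 : v = bl2.fe w := hm2'inj.2 hv (hbl2m.2.1 w hw) heq
    exact hnv ⟨w, hw, h1.symm⟩
  have hkc1v : ∀ w ∈ K1.nodes, m1'.fv (bl1.fv w) ∈ C1n := by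
    intro w hw
    refine ⟨hm1'mor.1 _ (hbl1m.1 w hw), ?_⟩
    rintro ⟨v, ⟨hv, hnv⟩, heq⟩
    have h1 : v = bl1.fv w := hm1'inj.1 hv (hbl1m.1 w hw) heq
    exact hnv ⟨w, hw, h1.symm⟩
  have hkc1e : ∀ w ∈ K1.edges, m1'.fe (bl1.fe w) ∈ C1e := by
    intro w hw
    refine ⟨hm1'mor.2.1 _ (hbl1m.2.1 w hw), ?_⟩
    rintro ⟨v, ⟨hv, hnv⟩, heq⟩
    have h1 : v = bl1.fe w := hm1'inj.2 hv (hbl1m.2.1 w hw) heq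
    exact hnv ⟨w, hw, h1.symm⟩
  -- survival transfer between the two contexts
  have hsurvD1v : ∀ y ∈ D1.nodes, d1H.fv y ∈ C2n →
      ∃ y2 ∈ D2.nodes, d2G.fv y2 = d1G.fv y ∧ d2H.fv y2 ∈ C1n := by
    intro y hy hyC
    have hx : d1G.fv y ∈ G.nodes := hd1Gm.1 y hy
    have hy2ex : ∃ y2 ∈ D2.nodes, d2G.fv y2 = d1G.fv y := by
      rcases hcovG2v (d1G.fv y) hx with ⟨v, hv, hveq⟩ | hok
      · have hjv : j2.fv v = y := hd1Ginjv (hj2mor.1 v hv) hy (by rw [hj2G v hv, hveq])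
        by_cases hb : v ∈ bl2.fv '' K2.nodes
        · obtain ⟨a, ha, hba⟩ := hb
          refine ⟨k2.fv a, hk2m.1 a ha, ?_⟩
          rw [← hcm2a a ha, hba, hveq]
        · exact absurd ⟨v, ⟨hv, hb⟩, by rw [show m2'.fv v = d1H.fv (j2.fv v) from rfl, hjv]⟩ hyC.2
      · exact hok
    obtain ⟨y2, hy2, hy2eq⟩ := hy2ex
    refine ⟨y2, hy2, hy2eq, ⟨hd2Hm.1 y2 hy2, ?_⟩⟩
    rintro ⟨v1, ⟨hv1, hnv1⟩, heq⟩
    have hj : j1.fv v1 = y2 := hd2Hinjv (hj1mor.1 v1 hv1) hy2 heq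
    have h3 : m1.fv v1 = d1G.fv y := by rw [← hj1G v1 hv1, hj, hy2eq]
    obtain ⟨a, ha, hba, -⟩ := hintG1v v1 hv1 y hy h3
    exact hnv1 ⟨a, ha, hba⟩
  have hsurvD1e : ∀ y ∈ D1.edges, d1H.fe y ∈ C2e →
      ∃ y2 ∈ D2.edges, d2G.fe y2 = d1G.fe y ∧ d2H.fe y2 ∈ C1e := by
    intro y hy hyC
    have hx : d1G.fe y ∈ G.edges := hd1Gm.2.1 y hy
    have hy2ex : ∃ y2 ∈ D2.edges, d2G.fe y2 = d1G.fe y := by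
      rcases hcovG2e (d1G.fe y) hx with ⟨v, hv, hveq⟩ | hok
      · have hjv : j2.fe v = y := hd1Ginje (hj2mor.2.1 v hv) hy (by rw [hj2Ge v hv, hveq])
        by_cases hb : v ∈ bl2.fe '' K2.edges
        · obtain ⟨a, ha, hba⟩ := hb
          refine ⟨k2.fe a, hk2m.2.1 a ha, ?_⟩
          rw [← hcm2ae a ha, hba, hveq]
        · exact absurd ⟨v, ⟨hv, hb⟩, by rw [show m2'.fe v = d1H.fe (j2.fe v) from rfl, hjv]⟩ hyC.2
      · exact hok
    obtain ⟨y2, hy2, hy2eq⟩ := hy2ex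
    refine ⟨y2, hy2, hy2eq, ⟨hd2Hm.2.1 y2 hy2, ?_⟩⟩
    rintro ⟨v1, ⟨hv1, hnv1⟩, heq⟩
    have hj : j1.fe v1 = y2 := hd2Hinje (hj1mor.2.1 v1 hv1) hy2 heq
    have h3 : m1.fe v1 = d1G.fe y := by rw [← hj1Ge v1 hv1, hj, hy2eq]
    obtain ⟨a, ha, hba, -⟩ := hintG1e v1 hv1 y hy h3
    exact hnv1 ⟨a, ha, hba⟩
  have hsurvD2v : ∀ y ∈ D2.nodes, d2H.fv y ∈ C1n →
      ∃ y1 ∈ D1.nodes, d1G.fv y1 = d2G.fv y ∧ d1H.fv y1 ∈ C2n := by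
    intro y hy hyC
    have hx : d2G.fv y ∈ G.nodes := hd2Gm.1 y hy
    have hy1ex : ∃ y1 ∈ D1.nodes, d1G.fv y1 = d2G.fv y := by
      rcases hcovG1v (d2G.fv y) hx with ⟨v, hv, hveq⟩ | hok
      · have hjv : j1.fv v = y := hd2Ginjv (hj1mor.1 v hv) hy (by rw [hj1G v hv, hveq])
        by_cases hb : v ∈ bl1.fv '' K1.nodes
        · obtain ⟨a, ha, hba⟩ := hb
          refine ⟨k1.fv a, hk1m.1 a ha, ?_⟩
          rw [← hcm1a a ha, hba, hveq]
        · exact absurd ⟨v, ⟨hv, hb⟩, by rw [show m1'.fv v = d2H.fv (j1.fv v) from rfl, hjv]⟩ hyC.2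
      · exact hok
    obtain ⟨y1, hy1, hy1eq⟩ := hy1ex
    refine ⟨y1, hy1, hy1eq, ⟨hd1Hm.1 y1 hy1, ?_⟩⟩
    rintro ⟨v2, ⟨hv2, hnv2⟩, heq⟩
    have hj : j2.fv v2 = y1 := hd1Hinjv (hj2mor.1 v2 hv2) hy1 heq
    have h3 : m2.fv v2 = d2G.fv y := by rw [← hj2G v2 hv2, hj, hy1eq]
    obtain ⟨a, ha, hba, -⟩ := hintG2v v2 hv2 y hy h3
    exact hnv2 ⟨a, ha, hba⟩
  have hsurvD2e : ∀ y ∈ D2.edges, d2H.fe y ∈ C1e →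
      ∃ y1 ∈ D1.edges, d1G.fe y1 = d2G.fe y ∧ d1H.fe y1 ∈ C2e := by
    intro y hy hyC
    have hx : d2G.fe y ∈ G.edges := hd2Gm.2.1 y hy
    have hy1ex : ∃ y1 ∈ D1.edges, d1G.fe y1 = d2G.fe y := by
      rcases hcovG1e (d2G.fe y) hx with ⟨v, hv, hveq⟩ | hok
      · have hjv : j1.fe v = y := hd2Ginje (hj1mor.2.1 v hv) hy (by rw [hj1Ge v hv, hveq])
        by_cases hb : v ∈ bl1.fe '' K1.edges
        · obtain ⟨a, ha, hba⟩ := hb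
          refine ⟨k1.fe a, hk1m.2.1 a ha, ?_⟩
          rw [← hcm1ae a ha, hba, hveq]
        · exact absurd ⟨v, ⟨hv, hb⟩, by rw [show m1'.fe v = d2H.fe (j1.fe v) from rfl, hjv]⟩ hyC.2
      · exact hok
    obtain ⟨y1, hy1, hy1eq⟩ := hy1ex
    refine ⟨y1, hy1, hy1eq, ⟨hd1Hm.2.1 y1 hy1, ?_⟩⟩
    rintro ⟨v2, ⟨hv2, hnv2⟩, heq⟩
    have hj : j2.fe v2 = y1 := hd1Hinje (hj2mor.2.1 v2 hv2) hy1 heq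
    have h3 : m2.fe v2 = d2G.fe y := by rw [← hj2Ge v2 hv2, hj, hy1eq]
    obtain ⟨a, ha, hba, -⟩ := hintG2e v2 hv2 y hy h3
    exact hnv2 ⟨a, ha, hba⟩
  -- pad structure for C2 (junk carrier elements only)
  set P2 : PreGraph (Vk2 ⊕ (Vr1 ⊕ Vd1 × Vh2)) (Ek2 ⊕ (Er1 ⊕ Ed1 × Eh2)) α β :=
    { nodes := ∅, edges := ∅,
      src := Sum.elim (fun d => Sum.inl (K2.src d))
        (Sum.elim (fun d => Sum.inr (Sum.inl (R1.src d)))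
          (fun p => Sum.inr (Sum.inr (D1.src p.1, H2.src p.2)))),
      tgt := Sum.elim (fun d => Sum.inl (K2.tgt d))
        (Sum.elim (fun d => Sum.inr (Sum.inl (R1.tgt d)))
          (fun p => Sum.inr (Sum.inr (D1.tgt p.1, H2.tgt p.2)))),
      lab := Sum.elim K2.lab (Sum.elim R1.lab (fun p => D1.lab p.1)),
      mrk := Sum.elim K2.mrk (Sum.elim R1.mrk (fun p => D1.mrk p.1)) } with hP2def
  set ι2 : PreMorph Vk2 Ek2 (Vk2 ⊕ (Vr1 ⊕ Vd1 × Vh2)) (Ek2 ⊕ (Er1 ⊕ Ed1 × Eh2)) :=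
    ⟨Sum.inl, Sum.inl⟩ with hι2def
  set padH2 : PreMorph (Vk2 ⊕ (Vr1 ⊕ Vd1 × Vh2)) (Ek2 ⊕ (Er1 ⊕ Ed1 × Eh2)) Vh1 Eh1 :=
    ⟨Sum.elim (fun w => m2'.fv (bl2.fv w)) (Sum.elim r1.fv (fun p => d1H.fv p.1)),
     Sum.elim (fun w => m2'.fe (bl2.fe w)) (Sum.elim r1.fe (fun p => d1H.fe p.1))⟩ with hpadH2def
  set Fjv2 : Vh1 → Vl2 ⊕ ((Vk2 ⊕ (Vr1 ⊕ Vd1 × Vh2)) ⊕ {z // z ∈ C2n}) :=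
    fun z => match can1.fv z with
    | Sum.inl w => Sum.inr (Sum.inl (Sum.inr (Sum.inl w)))
    | Sum.inr y =>
      if hne : Nonempty Vh2 then Sum.inr (Sum.inl (Sum.inr (Sum.inr (y, hne.some))))
      else match canG2.fv (d1G.fv y) with
        | Sum.inl v => Sum.inl v
        | Sum.inr y2 => (hne ⟨d2H.fv y2⟩).elim with hFjv2def
  set Fje2 : Eh1 → El2 ⊕ ((Ek2 ⊕ (Er1 ⊕ Ed1 × Eh2)) ⊕ {e // e ∈ C2e}) :=
    fun z => match can1.fe z with
    | Sum.inl w => Sum.inr (Sum.inl (Sum.inr (Sum.inl w)))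
    | Sum.inr y =>
      if hne : Nonempty Eh2 then Sum.inr (Sum.inl (Sum.inr (Sum.inr (y, hne.some))))
      else match canG2.fe (d1G.fe y) with
        | Sum.inl v => Sum.inl v
        | Sum.inr y2 => (hne ⟨d2H.fe y2⟩).elim with hFje2def
  obtain ⟨hC2graph, hk2'morC, hc2Hmor, hS1po⟩ :=
    complement_pushout hK2 hL2 hH1 hbl2m hm2'mor hm2'inj hC2n hC2e hdangle1s hdangle1t
      hkc2v hkc2e P2 ι2 padH2 Fjv2 Fje2
  set C2 := complGraph H1 C2n C2e hdangle1s hdangle1t P2 with hC2def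
  set k2' := complK K2 bl2 m2' C2n C2e hkc2v hkc2e ι2 with hk2'def
  set c2H := complH C2n C2e padH2 with hc2Hdef
  -- pad structure for C1
  set P1 : PreGraph (Vk1 ⊕ (Vr2 ⊕ Vd2 × Vh1)) (Ek1 ⊕ (Er2 ⊕ Ed2 × Eh1)) α β :=
    { nodes := ∅, edges := ∅,
      src := Sum.elim (fun d => Sum.inl (K1.src d))
        (Sum.elim (fun d => Sum.inr (Sum.inl (R2.src d)))
          (fun p => Sum.inr (Sum.inr (D2.src p.1, H1.src p.2)))),
      tgt := Sum.elim (fun d => Sum.inl (K1.tgt d))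
        (Sum.elim (fun d => Sum.inr (Sum.inl (R2.tgt d)))
          (fun p => Sum.inr (Sum.inr (D2.tgt p.1, H1.tgt p.2)))),
      lab := Sum.elim K1.lab (Sum.elim R2.lab (fun p => D2.lab p.1)),
      mrk := Sum.elim K1.mrk (Sum.elim R2.mrk (fun p => D2.mrk p.1)) } with hP1def
  set ι1 : PreMorph Vk1 Ek1 (Vk1 ⊕ (Vr2 ⊕ Vd2 × Vh1)) (Ek1 ⊕ (Er2 ⊕ Ed2 × Eh1)) :=
    ⟨Sum.inl, Sum.inl⟩ with hι1def
  set padH1 : PreMorph (Vk1 ⊕ (Vr2 ⊕ Vd2 × Vh1)) (Ek1 ⊕ (Er2 ⊕ Ed2 × Eh1)) Vh2 Eh2 :=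
    ⟨Sum.elim (fun w => m1'.fv (bl1.fv w)) (Sum.elim r2.fv (fun p => d2H.fv p.1)),
     Sum.elim (fun w => m1'.fe (bl1.fe w)) (Sum.elim r2.fe (fun p => d2H.fe p.1))⟩ with hpadH1def
  set Fjv1 : Vh2 → Vl1 ⊕ ((Vk1 ⊕ (Vr2 ⊕ Vd2 × Vh1)) ⊕ {z // z ∈ C1n}) :=
    fun z => match can2.fv z with
    | Sum.inl w => Sum.inr (Sum.inl (Sum.inr (Sum.inl w)))
    | Sum.inr y =>
      if hne : Nonempty Vh1 then Sum.inr (Sum.inl (Sum.inr (Sum.inr (y, hne.some))))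
      else match canG1.fv (d2G.fv y) with
        | Sum.inl v => Sum.inl v
        | Sum.inr y1 => (hne ⟨d1H.fv y1⟩).elim with hFjv1def
  set Fje1 : Eh2 → El1 ⊕ ((Ek1 ⊕ (Er2 ⊕ Ed2 × Eh1)) ⊕ {e // e ∈ C1e}) :=
    fun z => match can2.fe z with
    | Sum.inl w => Sum.inr (Sum.inl (Sum.inr (Sum.inl w)))
    | Sum.inr y =>
      if hne : Nonempty Eh1 then Sum.inr (Sum.inl (Sum.inr (Sum.inr (y, hne.some))))
      else match canG1.fe (d2G.fe y) with
        | Sum.inl v => Sum.inl v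
        | Sum.inr y1 => (hne ⟨d1H.fe y1⟩).elim with hFje1def
  obtain ⟨hC1graph, hk1'morC, hc1Hmor, hS3po⟩ :=
    complement_pushout hK1 hL1 hH2 hbl1m hm1'mor hm1'inj hC1n hC1e hdangle2s hdangle2t
      hkc1v hkc1e P1 ι1 padH1 Fjv1 Fje1
  set C1 := complGraph H2 C1n C1e hdangle2s hdangle2t P1 with hC1def
  set k1' := complK K1 bl1 m1' C1n C1e hkc1v hkc1e ι1 with hk1'def
  set c1H := complH C1n C1e padH1 with hc1Hdef
  -- value lemmas for k2', k1'
  have hk2'fv : ∀ x (hx : x ∈ K2.nodes),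
      k2'.fv x = Sum.inr ⟨m2'.fv (bl2.fv x), hkc2v x hx⟩ := fun x hx => dif_pos hx
  have hk2'fe : ∀ x (hx : x ∈ K2.edges),
      k2'.fe x = Sum.inr ⟨m2'.fe (bl2.fe x), hkc2e x hx⟩ := fun x hx => dif_pos hx
  have hk1'fv : ∀ x (hx : x ∈ K1.nodes),
      k1'.fv x = Sum.inr ⟨m1'.fv (bl1.fv x), hkc1v x hx⟩ := fun x hx => dif_pos hx
  have hk1'fe : ∀ x (hx : x ∈ K1.edges),
      k1'.fe x = Sum.inr ⟨m1'.fe (bl1.fe x), hkc1e x hx⟩ := fun x hx => dif_pos hx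
  have hk2'inj : MorInjective K2 k2' := by
    constructor
    · intro x hx y hy heq
      rw [hk2'fv x hx, hk2'fv y hy] at heq
      have h1 : m2'.fv (bl2.fv x) = m2'.fv (bl2.fv y) :=
        congrArg Subtype.val ((Sum.inr.injEq _ _).mp heq)
      exact hbl2.1 hx hy (hm2'inj.1 (hbl2m.1 x hx) (hbl2m.1 y hy) h1)
    · intro x hx y hy heq
      rw [hk2'fe x hx, hk2'fe y hy] at heq
      have h1 : m2'.fe (bl2.fe x) = m2'.fe (bl2.fe y) :=
        congrArg Subtype.val ((Sum.inr.injEq _ _).mp heq)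
      exact hbl2.2 hx hy (hm2'inj.2 (hbl2m.2.1 x hx) (hbl2m.2.1 y hy) h1)
  have hk1'inj : MorInjective K1 k1' := by
    constructor
    · intro x hx y hy heq
      rw [hk1'fv x hx, hk1'fv y hy] at heq
      have h1 : m1'.fv (bl1.fv x) = m1'.fv (bl1.fv y) :=
        congrArg Subtype.val ((Sum.inr.injEq _ _).mp heq)
      exact hbl1.1 hx hy (hm1'inj.1 (hbl1m.1 x hx) (hbl1m.1 y hy) h1)
    · intro x hx y hy heq
      rw [hk1'fe x hx, hk1'fe y hy] at heq
      have h1 : m1'.fe (bl1.fe x) = m1'.fe (bl1.fe y) :=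
        congrArg Subtype.val ((Sum.inr.injEq _ _).mp heq)
      exact hbl1.2 hx hy (hm1'inj.2 (hbl1m.2.1 x hx) (hbl1m.2.1 y hy) h1)
  -- the result graph G' as explicit pushout of R2 ← K2 → C2
  set G' := poD K2 R2 C2 br2 k2' with hG'def
  set r2' := poF K2 br2 k2' (α := α) (β := β) with hr2'def
  set c2G := poG Vr2 Er2 ((Vk2 ⊕ (Vr1 ⊕ Vd1 × Vh2)) ⊕ {z // z ∈ C2n})
    ((Ek2 ⊕ (Er1 ⊕ Ed1 × Eh2)) ⊕ {e // e ∈ C2e}) with hc2Gdef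
  have hS2po : IsPushout K2 R2 C2 G' br2 k2' r2' c2G :=
    po_isPushout hK2 hR2 hC2graph hbr2m hk2'morC hbr2 hk2'inj
  have hG'graph : IsGraph G' := poD_isGraph hK2 hR2 hC2graph hbr2m hk2'morC hbr2
  -- coverage of the complements
  have hC2coverv : ∀ s : {z // z ∈ C2n}, (∃ w ∈ R1.nodes, r1.fv w = s.1) ∨
      (∃ y1 ∈ D1.nodes, d1H.fv y1 = s.1 ∧ ∃ y2 ∈ D2.nodes,
        d2G.fv y2 = d1G.fv y1 ∧ d2H.fv y2 ∈ C1n) := by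
    intro s
    rcases hcovH1v s.1 s.2.1 with ⟨w, hw, hweq⟩ | ⟨y1, hy1, hyeq⟩
    · exact Or.inl ⟨w, hw, hweq⟩
    · right
      obtain ⟨y2, hy2, he1, he2⟩ := hsurvD1v y1 hy1 (by rw [hyeq]; exact s.2)
      exact ⟨y1, hy1, hyeq, y2, hy2, he1, he2⟩
  have hC2covere : ∀ s : {e // e ∈ C2e}, (∃ w ∈ R1.edges, r1.fe w = s.1) ∨
      (∃ y1 ∈ D1.edges, d1H.fe y1 = s.1 ∧ ∃ y2 ∈ D2.edges,
        d2G.fe y2 = d1G.fe y1 ∧ d2H.fe y2 ∈ C1e) := by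
    intro s
    rcases hcovH1e s.1 s.2.1 with ⟨w, hw, hweq⟩ | ⟨y1, hy1, hyeq⟩
    · exact Or.inl ⟨w, hw, hweq⟩
    · right
      obtain ⟨y2, hy2, he1, he2⟩ := hsurvD1e y1 hy1 (by rw [hyeq]; exact s.2)
      exact ⟨y1, hy1, hyeq, y2, hy2, he1, he2⟩
  have hC1coverv : ∀ s : {z // z ∈ C1n}, (∃ w ∈ R2.nodes, r2.fv w = s.1) ∨
      (∃ y2 ∈ D2.nodes, d2H.fv y2 = s.1 ∧ ∃ y1 ∈ D1.nodes,
        d1G.fv y1 = d2G.fv y2 ∧ d1H.fv y1 ∈ C2n) := by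
    intro s
    rcases hcovH2v s.1 s.2.1 with ⟨w, hw, hweq⟩ | ⟨y2, hy2, hyeq⟩
    · exact Or.inl ⟨w, hw, hweq⟩
    · right
      obtain ⟨y1, hy1, he1, he2⟩ := hsurvD2v y2 hy2 (by rw [hyeq]; exact s.2)
      exact ⟨y2, hy2, hyeq, y1, hy1, he1, he2⟩
  have hC1covere : ∀ s : {e // e ∈ C1e}, (∃ w ∈ R2.edges, r2.fe w = s.1) ∨
      (∃ y2 ∈ D2.edges, d2H.fe y2 = s.1 ∧ ∃ y1 ∈ D1.edges,
        d1G.fe y1 = d2G.fe y2 ∧ d1H.fe y1 ∈ C2e) := by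
    intro s
    rcases hcovH2e s.1 s.2.1 with ⟨w, hw, hweq⟩ | ⟨y2, hy2, hyeq⟩
    · exact Or.inl ⟨w, hw, hweq⟩
    · right
      obtain ⟨y1, hy1, he1, he2⟩ := hsurvD2e y2 hy2 (by rw [hyeq]; exact s.2)
      exact ⟨y2, hy2, hyeq, y1, hy1, he1, he2⟩
  -- the comatch of rule 1 in G'
  set r1' : PreMorph Vr1 Er1
      (Vr2 ⊕ ((Vk2 ⊕ (Vr1 ⊕ Vd1 × Vh2)) ⊕ {z // z ∈ C2n}))
      (Er2 ⊕ ((Ek2 ⊕ (Er1 ⊕ Ed1 × Eh2)) ⊕ {e // e ∈ C2e})) :=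
    ⟨fun w => if h : r1.fv w ∈ C2n then Sum.inr (Sum.inr ⟨r1.fv w, h⟩)
       else Sum.inr (Sum.inl (Sum.inr (Sum.inl w))),
     fun w => if h : r1.fe w ∈ C2e then Sum.inr (Sum.inr ⟨r1.fe w, h⟩)
       else Sum.inr (Sum.inl (Sum.inr (Sum.inl w)))⟩ with hr1'def
  have hr1'fv : ∀ w (_ : w ∈ R1.nodes),
      r1'.fv w = Sum.inr (Sum.inr ⟨r1.fv w, hravoid1v w ‹_›⟩) := fun w hw => dif_pos _
  have hr1'fe : ∀ w (_ : w ∈ R1.edges),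
      r1'.fe w = Sum.inr (Sum.inr ⟨r1.fe w, hravoid1e w ‹_›⟩) := fun w hw => dif_pos _
  -- the context inclusion C1 → G'
  set c1G : PreMorph
      ((Vk1 ⊕ (Vr2 ⊕ Vd2 × Vh1)) ⊕ {z // z ∈ C1n})
      ((Ek1 ⊕ (Er2 ⊕ Ed2 × Eh1)) ⊕ {e // e ∈ C1e})
      (Vr2 ⊕ ((Vk2 ⊕ (Vr1 ⊕ Vd1 × Vh2)) ⊕ {z // z ∈ C2n}))
      (Er2 ⊕ ((Ek2 ⊕ (Er1 ⊕ Ed1 × Eh2)) ⊕ {e // e ∈ C2e})) :=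
    ⟨fun x => match x with
      | Sum.inl (Sum.inl w) => r1'.fv (br1.fv w)
      | Sum.inl (Sum.inr (Sum.inl w)) => r2'.fv w
      | Sum.inl (Sum.inr (Sum.inr p)) =>
          (match can1.fv p.2 with
            | Sum.inl w => Sum.inr (Sum.inl (Sum.inr (Sum.inl w)))
            | Sum.inr y1 => Sum.inr (Sum.inl (Sum.inr (Sum.inr (y1, d2H.fv p.1)))))
      | Sum.inr s =>
          if h : ∃ w ∈ R2.nodes, r2.fv w = s.1 then r2'.fv h.choose
          else if h2 : ∃ y2 ∈ D2.nodes, d2H.fv y2 = s.1 ∧ ∃ y1 ∈ D1.nodes,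
              d1G.fv y1 = d2G.fv y2 ∧ d1H.fv y1 ∈ C2n then
            Sum.inr (Sum.inr ⟨d1H.fv h2.choose_spec.2.2.choose,
              h2.choose_spec.2.2.choose_spec.2.2⟩)
          else absurd ((hC1coverv s).resolve_left h) h2,
     fun x => match x with
      | Sum.inl (Sum.inl w) => r1'.fe (br1.fe w)
      | Sum.inl (Sum.inr (Sum.inl w)) => r2'.fe w
      | Sum.inl (Sum.inr (Sum.inr p)) =>
          (match can1.fe p.2 with
            | Sum.inl w => Sum.inr (Sum.inl (Sum.inr (Sum.inl w)))
            | Sum.inr y1 => Sum.inr (Sum.inl (Sum.inr (Sum.inr (y1, d2H.fe p.1)))))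
      | Sum.inr s =>
          if h : ∃ w ∈ R2.edges, r2.fe w = s.1 then r2'.fe h.choose
          else if h2 : ∃ y2 ∈ D2.edges, d2H.fe y2 = s.1 ∧ ∃ y1 ∈ D1.edges,
              d1G.fe y1 = d2G.fe y2 ∧ d1H.fe y1 ∈ C2e then
            Sum.inr (Sum.inr ⟨d1H.fe h2.choose_spec.2.2.choose,
              h2.choose_spec.2.2.choose_spec.2.2⟩)
          else absurd ((hC1covere s).resolve_left h) h2⟩ with hc1Gdef
  -- value lemmas for c1G on core elements
  have hc1GcoreR : ∀ (s : {z // z ∈ C1n}) (w : Vr2), w ∈ R2.nodes → r2.fv w = s.1 →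
      c1G.fv (Sum.inr s) = r2'.fv w := by
    intro s w hw hweq
    have h : ∃ w ∈ R2.nodes, r2.fv w = s.1 := ⟨w, hw, hweq⟩
    have h1 : c1G.fv (Sum.inr s) = r2'.fv h.choose := dif_pos h
    rw [h1]
    congr 1
    exact hr2injv h.choose_spec.1 hw (h.choose_spec.2.trans hweq.symm)
  have hc1GcoreRe : ∀ (s : {e // e ∈ C1e}) (w : Er2), w ∈ R2.edges → r2.fe w = s.1 →
      c1G.fe (Sum.inr s) = r2'.fe w := by
    intro s w hw hweq
    have h : ∃ w ∈ R2.edges, r2.fe w = s.1 := ⟨w, hw, hweq⟩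
    have h1 : c1G.fe (Sum.inr s) = r2'.fe h.choose := dif_pos h
    rw [h1]
    congr 1
    exact hr2inje h.choose_spec.1 hw (h.choose_spec.2.trans hweq.symm)
  have hc1Gcore : ∀ (s : {z // z ∈ C1n}) (y2 : Vd2) (y1 : Vd1), y2 ∈ D2.nodes →
      y1 ∈ D1.nodes → d2H.fv y2 = s.1 → d1G.fv y1 = d2G.fv y2 →
      ∀ (h1C : d1H.fv y1 ∈ C2n),
      c1G.fv (Sum.inr s) = Sum.inr (Sum.inr ⟨d1H.fv y1, h1C⟩) := by
    intro s y2 y1 hy2 hy1 hs1 hgeq h1C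
    by_cases h : ∃ w ∈ R2.nodes, r2.fv w = s.1
    · have h1 : c1G.fv (Sum.inr s) = r2'.fv h.choose := dif_pos h
      obtain ⟨hwmem, hweq⟩ := h.choose_spec
      have hrd : r2.fv h.choose = d2H.fv y2 := by rw [hweq, hs1]
      obtain ⟨a2, ha2, hba2, hka2⟩ := hintH2v _ hwmem y2 hy2 hrd
      have h2 : r2'.fv h.choose = Sum.inr (k2'.fv a2) := by
        rw [← hba2]
        exact poF_eq_of_mem hbr2.1 ha2
      have h3 : j2.fv (bl2.fv a2) = y1 := by
        apply hd1Ginjv (hj2mor.1 _ (hbl2m.1 a2 ha2)) hy1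
        rw [hj2G _ (hbl2m.1 a2 ha2), hcm2a a2 ha2, hka2, ← hgeq]
      rw [h1, h2, hk2'fv a2 ha2]
      congr 2
      apply Subtype.ext
      show m2'.fv (bl2.fv a2) = d1H.fv y1
      show d1H.fv (j2.fv (bl2.fv a2)) = d1H.fv y1
      rw [h3]
    · have h2 : ∃ y2 ∈ D2.nodes, d2H.fv y2 = s.1 ∧ ∃ y1 ∈ D1.nodes,
          d1G.fv y1 = d2G.fv y2 ∧ d1H.fv y1 ∈ C2n :=
        ⟨y2, hy2, hs1, y1, hy1, hgeq, h1C⟩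
      have h1 : c1G.fv (Sum.inr s) = Sum.inr (Sum.inr ⟨d1H.fv h2.choose_spec.2.2.choose,
          h2.choose_spec.2.2.choose_spec.2.2⟩) := by
        rw [show c1G.fv (Sum.inr s) = _ from dif_neg h, dif_pos h2]
      rw [h1]
      have hy2' : h2.choose = y2 :=
        hd2Hinjv h2.choose_spec.1 hy2 (h2.choose_spec.2.1.trans hs1.symm)
      have hy1' : h2.choose_spec.2.2.choose = y1 := by
        apply hd1Ginjv h2.choose_spec.2.2.choose_spec.1 hy1
        rw [h2.choose_spec.2.2.choose_spec.2.1, hy2', ← hgeq]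
      congr 2
      apply Subtype.ext
      show d1H.fv h2.choose_spec.2.2.choose = d1H.fv y1
      rw [hy1']
  have hc1Gcoree : ∀ (s : {e // e ∈ C1e}) (y2 : Ed2) (y1 : Ed1), y2 ∈ D2.edges →
      y1 ∈ D1.edges → d2H.fe y2 = s.1 → d1G.fe y1 = d2G.fe y2 →
      ∀ (h1C : d1H.fe y1 ∈ C2e),
      c1G.fe (Sum.inr s) = Sum.inr (Sum.inr ⟨d1H.fe y1, h1C⟩) := by
    intro s y2 y1 hy2 hy1 hs1 hgeq h1C
    by_cases h : ∃ w ∈ R2.edges, r2.fe w = s.1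
    · have h1 : c1G.fe (Sum.inr s) = r2'.fe h.choose := dif_pos h
      obtain ⟨hwmem, hweq⟩ := h.choose_spec
      have hrd : r2.fe h.choose = d2H.fe y2 := by rw [hweq, hs1]
      obtain ⟨a2, ha2, hba2, hka2⟩ := hintH2e _ hwmem y2 hy2 hrd
      have h2 : r2'.fe h.choose = Sum.inr (k2'.fe a2) := by
        rw [← hba2]
        exact poF_eq_of_mem_e hbr2.2 ha2
      have h3 : j2.fe (bl2.fe a2) = y1 := by
        apply hd1Ginje (hj2mor.2.1 _ (hbl2m.2.1 a2 ha2)) hy1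
        rw [hj2Ge _ (hbl2m.2.1 a2 ha2), hcm2ae a2 ha2, hka2, ← hgeq]
      rw [h1, h2, hk2'fe a2 ha2]
      congr 2
      apply Subtype.ext
      show m2'.fe (bl2.fe a2) = d1H.fe y1
      show d1H.fe (j2.fe (bl2.fe a2)) = d1H.fe y1
      rw [h3]
    · have h2 : ∃ y2 ∈ D2.edges, d2H.fe y2 = s.1 ∧ ∃ y1 ∈ D1.edges,
          d1G.fe y1 = d2G.fe y2 ∧ d1H.fe y1 ∈ C2e :=
        ⟨y2, hy2, hs1, y1, hy1, hgeq, h1C⟩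
      have h1 : c1G.fe (Sum.inr s) = Sum.inr (Sum.inr ⟨d1H.fe h2.choose_spec.2.2.choose,
          h2.choose_spec.2.2.choose_spec.2.2⟩) := by
        rw [show c1G.fe (Sum.inr s) = _ from dif_neg h, dif_pos h2]
      rw [h1]
      have hy2' : h2.choose = y2 :=
        hd2Hinje h2.choose_spec.1 hy2 (h2.choose_spec.2.1.trans hs1.symm)
      have hy1' : h2.choose_spec.2.2.choose = y1 := by
        apply hd1Ginje h2.choose_spec.2.2.choose_spec.1 hy1
        rw [h2.choose_spec.2.2.choose_spec.2.1, hy2', ← hgeq]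
      congr 2
      apply Subtype.ext
      show d1H.fe h2.choose_spec.2.2.choose = d1H.fe y1
      rw [hy1']
  have hr2'mor : IsMorphism R2 G' r2' := hS2po.2.2.1
  have hr2'injv : Set.InjOn r2'.fv R2.nodes := (poF_inj (B := R2) hbr2 hk2'inj).1
  have hr2'inje : Set.InjOn r2'.fe R2.edges := (poF_inj (B := R2) hbr2 hk2'inj).2
  have hr1'mor : IsMorphism R1 G' r1' := by
    refine ⟨?_, ?_, ?_, ?_, ?_, ?_⟩
    · intro w hw
      rw [hr1'fv w hw]
      exact Or.inr ⟨Sum.inr ⟨r1.fv w, hravoid1v w hw⟩, ⟨_, rfl⟩, rfl⟩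
    · intro w hw
      rw [hr1'fe w hw]
      exact Or.inr ⟨Sum.inr ⟨r1.fe w, hravoid1e w hw⟩, ⟨_, rfl⟩, rfl⟩
    · intro e he
      rw [hr1'fv _ (hR1.2.2.1 e he), hr1'fe e he]
      exact congrArg Sum.inr (congrArg Sum.inr (Subtype.ext (hr1m.2.2.1 e he)))
    · intro e he
      rw [hr1'fv _ (hR1.2.2.2 e he), hr1'fe e he]
      exact congrArg Sum.inr (congrArg Sum.inr (Subtype.ext (hr1m.2.2.2.1 e he)))
    · intro v hv
      rw [hr1'fv v hv]
      exact hr1m.2.2.2.2.1 v hv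
    · intro e he
      rw [hr1'fe e he]
      exact hr1m.2.2.2.2.2 e he
  have hr1'injv : Set.InjOn r1'.fv R1.nodes := by
    intro x hx y hy heq
    rw [hr1'fv x hx, hr1'fv y hy] at heq
    have h1 : r1.fv x = r1.fv y :=
      congrArg Subtype.val ((Sum.inr.injEq _ _).mp ((Sum.inr.injEq _ _).mp heq))
    exact hr1injv hx hy h1
  have hr1'inje : Set.InjOn r1'.fe R1.edges := by
    intro x hx y hy heq
    rw [hr1'fe x hx, hr1'fe y hy] at heq
    have h1 : r1.fe x = r1.fe y :=
      congrArg Subtype.val ((Sum.inr.injEq _ _).mp ((Sum.inr.injEq _ _).mp heq))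
    exact hr1inje hx hy h1
  have hc1Gmor : IsMorphism C1 G' c1G := by
    refine ⟨?_, ?_, ?_, ?_, ?_, ?_⟩
    · rintro v ⟨s, rfl⟩
      rcases hC1coverv s with ⟨w, hw, hweq⟩ | ⟨y2, hy2, hs1, y1, hy1, hgeq, h1C⟩
      · rw [hc1GcoreR s w hw hweq]
        exact hr2'mor.1 w hw
      · rw [hc1Gcore s y2 y1 hy2 hy1 hs1 hgeq h1C]
        exact Or.inr ⟨_, ⟨_, rfl⟩, rfl⟩
    · rintro e ⟨s, rfl⟩
      rcases hC1covere s with ⟨w, hw, hweq⟩ | ⟨y2, hy2, hs1, y1, hy1, hgeq, h1C⟩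
      · rw [hc1GcoreRe s w hw hweq]
        exact hr2'mor.2.1 w hw
      · rw [hc1Gcoree s y2 y1 hy2 hy1 hs1 hgeq h1C]
        exact Or.inr ⟨_, ⟨_, rfl⟩, rfl⟩
    · rintro e ⟨se, rfl⟩
      rcases hC1covere se with ⟨we, hwe, hweq⟩ | ⟨y2, hy2, hs1, y1, hy1, hgeq, h1C⟩
      · rw [hc1GcoreRe se we hwe hweq, ← hr2'mor.2.2.1 we hwe]
        have hnode : r2.fv (R2.src we) =
            (⟨H2.src se.1, hdangle2s se.1 se.2⟩ : {z // z ∈ C1n}).1 := by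
          show r2.fv (R2.src we) = H2.src se.1
          rw [← hweq, ← hr2m.2.2.1 we hwe]
        exact hc1GcoreR _ _ (hR2.2.2.1 we hwe) hnode
      · rw [hc1Gcoree se y2 y1 hy2 hy1 hs1 hgeq h1C]
        have hsrc1 : d1H.fv (D1.src y1) ∈ C2n := by
          have h := hdangle1s _ h1C
          rwa [← hd1Hm.2.2.1 y1 hy1] at h
        have hgeq' : d1G.fv (D1.src y1) = d2G.fv (D2.src y2) := by
          rw [hd1Gm.2.2.1 y1 hy1, hgeq, hd2Gm.2.2.1 y2 hy2]
        have hs1' : d2H.fv (D2.src y2) =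
            (⟨H2.src se.1, hdangle2s se.1 se.2⟩ : {z // z ∈ C1n}).1 := by
          show d2H.fv (D2.src y2) = H2.src se.1
          rw [← hs1, ← hd2Hm.2.2.1 y2 hy2]
        have hL := hc1Gcore ⟨H2.src se.1, hdangle2s se.1 se.2⟩ (D2.src y2) (D1.src y1)
          (hD2.2.2.1 y2 hy2) (hD1.2.2.1 y1 hy1) hs1' hgeq' hsrc1
        exact hL.trans (congrArg Sum.inr (congrArg Sum.inr (Subtype.ext (hd1Hm.2.2.1 y1 hy1))))
    · rintro e ⟨se, rfl⟩
      rcases hC1covere se with ⟨we, hwe, hweq⟩ | ⟨y2, hy2, hs1, y1, hy1, hgeq, h1C⟩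
      · rw [hc1GcoreRe se we hwe hweq, ← hr2'mor.2.2.2.1 we hwe]
        have hnode : r2.fv (R2.tgt we) =
            (⟨H2.tgt se.1, hdangle2t se.1 se.2⟩ : {z // z ∈ C1n}).1 := by
          show r2.fv (R2.tgt we) = H2.tgt se.1
          rw [← hweq, ← hr2m.2.2.2.1 we hwe]
        exact hc1GcoreR _ _ (hR2.2.2.2 we hwe) hnode
      · rw [hc1Gcoree se y2 y1 hy2 hy1 hs1 hgeq h1C]
        have hsrc1 : d1H.fv (D1.tgt y1) ∈ C2n := by
          have h := hdangle1t _ h1C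
          rwa [← hd1Hm.2.2.2.1 y1 hy1] at h
        have hgeq' : d1G.fv (D1.tgt y1) = d2G.fv (D2.tgt y2) := by
          rw [hd1Gm.2.2.2.1 y1 hy1, hgeq, hd2Gm.2.2.2.1 y2 hy2]
        have hs1' : d2H.fv (D2.tgt y2) =
            (⟨H2.tgt se.1, hdangle2t se.1 se.2⟩ : {z // z ∈ C1n}).1 := by
          show d2H.fv (D2.tgt y2) = H2.tgt se.1
          rw [← hs1, ← hd2Hm.2.2.2.1 y2 hy2]
        have hL := hc1Gcore ⟨H2.tgt se.1, hdangle2t se.1 se.2⟩ (D2.tgt y2) (D1.tgt y1)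
          (hD2.2.2.2 y2 hy2) (hD1.2.2.2 y1 hy1) hs1' hgeq' hsrc1
        exact hL.trans (congrArg Sum.inr (congrArg Sum.inr (Subtype.ext (hd1Hm.2.2.2.1 y1 hy1))))
    · rintro v ⟨s, rfl⟩
      rcases hC1coverv s with ⟨w, hw, hweq⟩ | ⟨y2, hy2, hs1, y1, hy1, hgeq, h1C⟩
      · rw [hc1GcoreR s w hw hweq]
        show H2.lab s.1 = _
        rw [← hweq, ← hr2m.2.2.2.2.1 w hw]
        exact hr2'mor.2.2.2.2.1 w hw
      · rw [hc1Gcore s y2 y1 hy2 hy1 hs1 hgeq h1C]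
        show H2.lab s.1 = H1.lab (d1H.fv y1)
        calc H2.lab s.1 = H2.lab (d2H.fv y2) := by rw [hs1]
          _ = D2.lab y2 := (hd2Hm.2.2.2.2.1 y2 hy2).symm
          _ = G.lab (d2G.fv y2) := hd2Gm.2.2.2.2.1 y2 hy2
          _ = G.lab (d1G.fv y1) := by rw [hgeq]
          _ = D1.lab y1 := (hd1Gm.2.2.2.2.1 y1 hy1).symm
          _ = H1.lab (d1H.fv y1) := hd1Hm.2.2.2.2.1 y1 hy1
    · rintro e ⟨s, rfl⟩
      rcases hC1covere s with ⟨w, hw, hweq⟩ | ⟨y2, hy2, hs1, y1, hy1, hgeq, h1C⟩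
      · rw [hc1GcoreRe s w hw hweq]
        show H2.mrk s.1 = _
        rw [← hweq, ← hr2m.2.2.2.2.2 w hw]
        exact hr2'mor.2.2.2.2.2 w hw
      · rw [hc1Gcoree s y2 y1 hy2 hy1 hs1 hgeq h1C]
        show H2.mrk s.1 = H1.mrk (d1H.fe y1)
        calc H2.mrk s.1 = H2.mrk (d2H.fe y2) := by rw [hs1]
          _ = D2.mrk y2 := (hd2Hm.2.2.2.2.2 y2 hy2).symm
          _ = G.mrk (d2G.fe y2) := hd2Gm.2.2.2.2.2 y2 hy2
          _ = G.mrk (d1G.fe y1) := by rw [hgeq]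
          _ = D1.mrk y1 := (hd1Gm.2.2.2.2.2 y1 hy1).symm
          _ = H1.mrk (d1H.fe y1) := hd1Hm.2.2.2.2.2 y1 hy1
  have hmixv : ∀ (s s' : {z // z ∈ C1n}) (w : Vr2) (y2 : Vd2) (y1 : Vd1),
      w ∈ R2.nodes → r2.fv w = s.1 → y2 ∈ D2.nodes → d2H.fv y2 = s'.1 → y1 ∈ D1.nodes →
      d1G.fv y1 = d2G.fv y2 → ∀ h1C : d1H.fv y1 ∈ C2n,
      r2'.fv w = Sum.inr (Sum.inr ⟨d1H.fv y1, h1C⟩) → s.1 = s'.1 := by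
    intro s s' w y2 y1 hw hweq hy2 hs1' hy1 hgeq h1C heq
    obtain ⟨a, ha, hba, hka⟩ := poF_inr heq
    rw [hk2'fv a ha] at hka
    have hval : m2'.fv (bl2.fv a) = d1H.fv y1 :=
      congrArg Subtype.val ((Sum.inr.injEq _ _).mp hka)
    have hjj : j2.fv (bl2.fv a) = y1 := hd1Hinjv (hj2mor.1 _ (hbl2m.1 a ha)) hy1 hval
    have hch : d2G.fv (k2.fv a) = d2G.fv y2 := by
      rw [← hcm2a a ha, ← hj2G _ (hbl2m.1 a ha), hjj, hgeq]
    have hk2y2 : k2.fv a = y2 := hd2Ginjv (hk2m.1 a ha) hy2 hch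
    calc s.1 = r2.fv w := hweq.symm
      _ = r2.fv (br2.fv a) := by rw [hba]
      _ = d2H.fv (k2.fv a) := hcm2b a ha
      _ = d2H.fv y2 := by rw [hk2y2]
      _ = s'.1 := hs1'
  have hmixe : ∀ (s s' : {e // e ∈ C1e}) (w : Er2) (y2 : Ed2) (y1 : Ed1),
      w ∈ R2.edges → r2.fe w = s.1 → y2 ∈ D2.edges → d2H.fe y2 = s'.1 → y1 ∈ D1.edges →
      d1G.fe y1 = d2G.fe y2 → ∀ h1C : d1H.fe y1 ∈ C2e,
      r2'.fe w = Sum.inr (Sum.inr ⟨d1H.fe y1, h1C⟩) → s.1 = s'.1 := by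
    intro s s' w y2 y1 hw hweq hy2 hs1' hy1 hgeq h1C heq
    obtain ⟨a, ha, hba, hka⟩ := poF_inr_e heq
    rw [hk2'fe a ha] at hka
    have hval : m2'.fe (bl2.fe a) = d1H.fe y1 :=
      congrArg Subtype.val ((Sum.inr.injEq _ _).mp hka)
    have hjj : j2.fe (bl2.fe a) = y1 := hd1Hinje (hj2mor.2.1 _ (hbl2m.2.1 a ha)) hy1 hval
    have hch : d2G.fe (k2.fe a) = d2G.fe y2 := by
      rw [← hcm2ae a ha, ← hj2Ge _ (hbl2m.2.1 a ha), hjj, hgeq]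
    have hk2y2 : k2.fe a = y2 := hd2Ginje (hk2m.2.1 a ha) hy2 hch
    calc s.1 = r2.fe w := hweq.symm
      _ = r2.fe (br2.fe a) := by rw [hba]
      _ = d2H.fe (k2.fe a) := hcm2be a ha
      _ = d2H.fe y2 := by rw [hk2y2]
      _ = s'.1 := hs1'
  have hc1Ginjv : Set.InjOn c1G.fv C1.nodes := by
    rintro x ⟨s, rfl⟩ y ⟨s', rfl⟩ heq
    refine congrArg Sum.inr (Subtype.ext ?_)
    rcases hC1coverv s with ⟨w, hw, hweq⟩ | ⟨y2, hy2, hs1, y1, hy1, hgeq, h1C⟩ <;>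
      rcases hC1coverv s' with ⟨w', hw', hweq'⟩ | ⟨y2', hy2', hs1', y1', hy1', hgeq', h1C'⟩
    · rw [hc1GcoreR s w hw hweq, hc1GcoreR s' w' hw' hweq'] at heq
      rw [← hweq, ← hweq']
      exact congrArg r2.fv (hr2'injv hw hw' heq)
    · rw [hc1GcoreR s w hw hweq, hc1Gcore s' y2' y1' hy2' hy1' hs1' hgeq' h1C'] at heq
      exact hmixv s s' w y2' y1' hw hweq hy2' hs1' hy1' hgeq' h1C' heq
    · rw [hc1Gcore s y2 y1 hy2 hy1 hs1 hgeq h1C, hc1GcoreR s' w' hw' hweq'] at heq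
      exact (hmixv s' s w' y2 y1 hw' hweq' hy2 hs1 hy1 hgeq h1C heq.symm).symm
    · rw [hc1Gcore s y2 y1 hy2 hy1 hs1 hgeq h1C,
        hc1Gcore s' y2' y1' hy2' hy1' hs1' hgeq' h1C'] at heq
      have hv : d1H.fv y1 = d1H.fv y1' :=
        congrArg Subtype.val ((Sum.inr.injEq _ _).mp ((Sum.inr.injEq _ _).mp heq))
      have h1 : y1 = y1' := hd1Hinjv hy1 hy1' hv
      have h2 : y2 = y2' := hd2Ginjv hy2 hy2' (by rw [← hgeq, ← hgeq', h1])
      rw [← hs1, ← hs1', h2]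
  have hc1Ginje : Set.InjOn c1G.fe C1.edges := by
    rintro x ⟨s, rfl⟩ y ⟨s', rfl⟩ heq
    refine congrArg Sum.inr (Subtype.ext ?_)
    rcases hC1covere s with ⟨w, hw, hweq⟩ | ⟨y2, hy2, hs1, y1, hy1, hgeq, h1C⟩ <;>
      rcases hC1covere s' with ⟨w', hw', hweq'⟩ | ⟨y2', hy2', hs1', y1', hy1', hgeq', h1C'⟩
    · rw [hc1GcoreRe s w hw hweq, hc1GcoreRe s' w' hw' hweq'] at heq
      rw [← hweq, ← hweq']
      exact congrArg r2.fe (hr2'inje hw hw' heq)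
    · rw [hc1GcoreRe s w hw hweq, hc1Gcoree s' y2' y1' hy2' hy1' hs1' hgeq' h1C'] at heq
      exact hmixe s s' w y2' y1' hw hweq hy2' hs1' hy1' hgeq' h1C' heq
    · rw [hc1Gcoree s y2 y1 hy2 hy1 hs1 hgeq h1C, hc1GcoreRe s' w' hw' hweq'] at heq
      exact (hmixe s' s w' y2 y1 hw' hweq' hy2 hs1 hy1 hgeq h1C heq.symm).symm
    · rw [hc1Gcoree s y2 y1 hy2 hy1 hs1 hgeq h1C,
        hc1Gcoree s' y2' y1' hy2' hy1' hs1' hgeq' h1C'] at heq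
      have hv : d1H.fe y1 = d1H.fe y1' :=
        congrArg Subtype.val ((Sum.inr.injEq _ _).mp ((Sum.inr.injEq _ _).mp heq))
      have h1 : y1 = y1' := hd1Hinje hy1 hy1' hv
      have h2 : y2 = y2' := hd2Ginje hy2 hy2' (by rw [← hgeq, ← hgeq', h1])
      rw [← hs1, ← hs1', h2]
  have hcomm4 : MorEq K1 (comp r1' br1) (comp c1G k1') := by
    constructor
    · intro a ha
      show r1'.fv (br1.fv a) = c1G.fv (k1'.fv a)
      rw [hk1'fv a ha]
      have h1C : d1H.fv (k1.fv a) ∈ C2n := by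
        rw [← hcm1b a ha]; exact hravoid1v _ (hbr1m.1 a ha)
      have hgeq : d1G.fv (k1.fv a) = d2G.fv (j1.fv (bl1.fv a)) := by
        rw [← hcm1a a ha, hj1G _ (hbl1m.1 a ha)]
      have hR := hc1Gcore ⟨m1'.fv (bl1.fv a), hkc1v a ha⟩ (j1.fv (bl1.fv a)) (k1.fv a)
        (hj1mor.1 _ (hbl1m.1 a ha)) (hk1m.1 a ha) rfl hgeq h1C
      rw [hR, hr1'fv _ (hbr1m.1 a ha)]
      exact congrArg Sum.inr (congrArg Sum.inr (Subtype.ext (hcm1b a ha)))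
    · intro a ha
      show r1'.fe (br1.fe a) = c1G.fe (k1'.fe a)
      rw [hk1'fe a ha]
      have h1C : d1H.fe (k1.fe a) ∈ C2e := by
        rw [← hcm1be a ha]; exact hravoid1e _ (hbr1m.2.1 a ha)
      have hgeq : d1G.fe (k1.fe a) = d2G.fe (j1.fe (bl1.fe a)) := by
        rw [← hcm1ae a ha, hj1Ge _ (hbl1m.2.1 a ha)]
      have hR := hc1Gcoree ⟨m1'.fe (bl1.fe a), hkc1e a ha⟩ (j1.fe (bl1.fe a)) (k1.fe a)
        (hj1mor.2.1 _ (hbl1m.2.1 a ha)) (hk1m.2.1 a ha) rfl hgeq h1C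
      rw [hR, hr1'fe _ (hbr1m.2.1 a ha)]
      exact congrArg Sum.inr (congrArg Sum.inr (Subtype.ext (hcm1be a ha)))
  set φ4 : (Vr2 ⊕ ((Vk2 ⊕ (Vr1 ⊕ Vd1 × Vh2)) ⊕ {z // z ∈ C2n})) →
      Vr1 ⊕ ((Vk1 ⊕ (Vr2 ⊕ Vd2 × Vh1)) ⊕ {z // z ∈ C1n}) :=
    fun z => match z with
    | Sum.inl w => if h : r2.fv w ∈ C1n then Sum.inr (Sum.inr ⟨r2.fv w, h⟩)
        else Sum.inr (Sum.inl (Sum.inr (Sum.inl w)))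
    | Sum.inr (Sum.inl (Sum.inl w)) => Sum.inr (Sum.inl (Sum.inr (Sum.inl (br2.fv w))))
    | Sum.inr (Sum.inl (Sum.inr (Sum.inl w))) => Sum.inl w
    | Sum.inr (Sum.inl (Sum.inr (Sum.inr p))) =>
        (match can2.fv p.2 with
          | Sum.inl w => Sum.inr (Sum.inl (Sum.inr (Sum.inl w)))
          | Sum.inr y2 => Sum.inr (Sum.inl (Sum.inr (Sum.inr (y2, d1H.fv p.1)))))
    | Sum.inr (Sum.inr s) =>
        if h : ∃ w ∈ R1.nodes, r1.fv w = s.1 then Sum.inl h.choose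
        else if h2 : ∃ y1 ∈ D1.nodes, d1H.fv y1 = s.1 ∧ ∃ y2 ∈ D2.nodes,
            d2G.fv y2 = d1G.fv y1 ∧ d2H.fv y2 ∈ C1n then
          Sum.inr (Sum.inr ⟨d2H.fv h2.choose_spec.2.2.choose,
            h2.choose_spec.2.2.choose_spec.2.2⟩)
        else absurd ((hC2coverv s).resolve_left h) h2 with hφ4def
  set ψ4 : (Er2 ⊕ ((Ek2 ⊕ (Er1 ⊕ Ed1 × Eh2)) ⊕ {e // e ∈ C2e})) →
      Er1 ⊕ ((Ek1 ⊕ (Er2 ⊕ Ed2 × Eh1)) ⊕ {e // e ∈ C1e}) :=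
    fun z => match z with
    | Sum.inl w => if h : r2.fe w ∈ C1e then Sum.inr (Sum.inr ⟨r2.fe w, h⟩)
        else Sum.inr (Sum.inl (Sum.inr (Sum.inl w)))
    | Sum.inr (Sum.inl (Sum.inl w)) => Sum.inr (Sum.inl (Sum.inr (Sum.inl (br2.fe w))))
    | Sum.inr (Sum.inl (Sum.inr (Sum.inl w))) => Sum.inl w
    | Sum.inr (Sum.inl (Sum.inr (Sum.inr p))) =>
        (match can2.fe p.2 with
          | Sum.inl w => Sum.inr (Sum.inl (Sum.inr (Sum.inl w)))
          | Sum.inr y2 => Sum.inr (Sum.inl (Sum.inr (Sum.inr (y2, d1H.fe p.1)))))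
    | Sum.inr (Sum.inr s) =>
        if h : ∃ w ∈ R1.edges, r1.fe w = s.1 then Sum.inl h.choose
        else if h2 : ∃ y1 ∈ D1.edges, d1H.fe y1 = s.1 ∧ ∃ y2 ∈ D2.edges,
            d2G.fe y2 = d1G.fe y1 ∧ d2H.fe y2 ∈ C1e then
          Sum.inr (Sum.inr ⟨d2H.fe h2.choose_spec.2.2.choose,
            h2.choose_spec.2.2.choose_spec.2.2⟩)
        else absurd ((hC2covere s).resolve_left h) h2 with hψ4def
  have hφ4 : ∀ z ∈ G'.nodes, (∃ x ∈ R1.nodes, φ4 z = Sum.inl x ∧ r1'.fv x = z) ∨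
      (∃ y ∈ C1.nodes, φ4 z = Sum.inr y ∧ c1G.fv y = z) := by
    rintro z (⟨w, ⟨hw, hnw⟩, rfl⟩ | ⟨x, ⟨s, rfl⟩, rfl⟩)
    · refine Or.inr ⟨Sum.inr ⟨r2.fv w, hravoid2v w hw⟩, ⟨_, rfl⟩, dif_pos _, ?_⟩
      rw [hc1GcoreR ⟨r2.fv w, hravoid2v w hw⟩ w hw rfl]
      exact poF_eq_of_not_mem (by simpa using hnw)
    · by_cases h : ∃ w ∈ R1.nodes, r1.fv w = s.1
      · refine Or.inl ⟨h.choose, h.choose_spec.1, dif_pos h, ?_⟩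
        rw [hr1'fv _ h.choose_spec.1]
        exact congrArg Sum.inr (congrArg Sum.inr (Subtype.ext h.choose_spec.2))
      · have h2 : ∃ y1 ∈ D1.nodes, d1H.fv y1 = s.1 ∧ ∃ y2 ∈ D2.nodes,
            d2G.fv y2 = d1G.fv y1 ∧ d2H.fv y2 ∈ C1n := (hC2coverv s).resolve_left h
        refine Or.inr ⟨Sum.inr ⟨d2H.fv h2.choose_spec.2.2.choose,
          h2.choose_spec.2.2.choose_spec.2.2⟩, ⟨_, rfl⟩,
          (dif_neg h).trans (dif_pos h2), ?_⟩
        have hgeq : d1G.fv h2.choose = d2G.fv h2.choose_spec.2.2.choose :=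
          h2.choose_spec.2.2.choose_spec.2.1.symm
        have h1C : d1H.fv h2.choose ∈ C2n := by
          rw [h2.choose_spec.2.1]; exact s.2
        have hval := hc1Gcore ⟨d2H.fv h2.choose_spec.2.2.choose,
            h2.choose_spec.2.2.choose_spec.2.2⟩ h2.choose_spec.2.2.choose h2.choose
          h2.choose_spec.2.2.choose_spec.1 h2.choose_spec.1 rfl hgeq h1C
        rw [hval]
        exact congrArg Sum.inr (congrArg Sum.inr (Subtype.ext h2.choose_spec.2.1))
  have hψ4 : ∀ z ∈ G'.edges, (∃ x ∈ R1.edges, ψ4 z = Sum.inl x ∧ r1'.fe x = z) ∨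
      (∃ y ∈ C1.edges, ψ4 z = Sum.inr y ∧ c1G.fe y = z) := by
    rintro z (⟨w, ⟨hw, hnw⟩, rfl⟩ | ⟨x, ⟨s, rfl⟩, rfl⟩)
    · refine Or.inr ⟨Sum.inr ⟨r2.fe w, hravoid2e w hw⟩, ⟨_, rfl⟩, dif_pos _, ?_⟩
      rw [hc1GcoreRe ⟨r2.fe w, hravoid2e w hw⟩ w hw rfl]
      exact poF_eq_of_not_mem_e (by simpa using hnw)
    · by_cases h : ∃ w ∈ R1.edges, r1.fe w = s.1
      · refine Or.inl ⟨h.choose, h.choose_spec.1, dif_pos h, ?_⟩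
        rw [hr1'fe _ h.choose_spec.1]
        exact congrArg Sum.inr (congrArg Sum.inr (Subtype.ext h.choose_spec.2))
      · have h2 : ∃ y1 ∈ D1.edges, d1H.fe y1 = s.1 ∧ ∃ y2 ∈ D2.edges,
            d2G.fe y2 = d1G.fe y1 ∧ d2H.fe y2 ∈ C1e := (hC2covere s).resolve_left h
        refine Or.inr ⟨Sum.inr ⟨d2H.fe h2.choose_spec.2.2.choose,
          h2.choose_spec.2.2.choose_spec.2.2⟩, ⟨_, rfl⟩,
          (dif_neg h).trans (dif_pos h2), ?_⟩
        have hgeq : d1G.fe h2.choose = d2G.fe h2.choose_spec.2.2.choose :=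
          h2.choose_spec.2.2.choose_spec.2.1.symm
        have h1C : d1H.fe h2.choose ∈ C2e := by
          rw [h2.choose_spec.2.1]; exact s.2
        have hval := hc1Gcoree ⟨d2H.fe h2.choose_spec.2.2.choose,
            h2.choose_spec.2.2.choose_spec.2.2⟩ h2.choose_spec.2.2.choose h2.choose
          h2.choose_spec.2.2.choose_spec.1 h2.choose_spec.1 rfl hgeq h1C
        rw [hval]
        exact congrArg Sum.inr (congrArg Sum.inr (Subtype.ext h2.choose_spec.2.1))
  have hint4v : ∀ x ∈ R1.nodes, ∀ y ∈ C1.nodes, r1'.fv x = c1G.fv y →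
      ∃ a ∈ K1.nodes, br1.fv a = x ∧ k1'.fv a = y := by
    intro x hx y hy heq
    obtain ⟨s, rfl⟩ := hy
    rw [hr1'fv x hx] at heq
    rcases hC1coverv s with ⟨w, hw, hweq⟩ | ⟨y2, hy2, hs1, y1, hy1, hgeq, h1C⟩
    · rw [hc1GcoreR s w hw hweq] at heq
      obtain ⟨a2, ha2, hba2, hk⟩ := poF_inr heq.symm
      rw [hk2'fv a2 ha2] at hk
      have hval : m2'.fv (bl2.fv a2) = r1.fv x :=
        congrArg Subtype.val ((Sum.inr.injEq _ _).mp hk)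
      obtain ⟨a1, ha1, hbra1, hka1⟩ := hintH1v x hx (j2.fv (bl2.fv a2))
        (hj2mor.1 _ (hbl2m.1 a2 ha2)) hval.symm
      refine ⟨a1, ha1, hbra1, ?_⟩
      rw [hk1'fv a1 ha1]
      refine congrArg Sum.inr (Subtype.ext ?_)
      have hj : j1.fv (bl1.fv a1) = k2.fv a2 := by
        apply hd2Ginjv (hj1mor.1 _ (hbl1m.1 a1 ha1)) (hk2m.1 a2 ha2)
        rw [hj1G _ (hbl1m.1 a1 ha1), hcm1a a1 ha1, hka1, hj2G _ (hbl2m.1 a2 ha2),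
          hcm2a a2 ha2]
      show d2H.fv (j1.fv (bl1.fv a1)) = s.1
      rw [hj, ← hcm2b a2 ha2, hba2, hweq]
    · rw [hc1Gcore s y2 y1 hy2 hy1 hs1 hgeq h1C] at heq
      have hval : r1.fv x = d1H.fv y1 :=
        congrArg Subtype.val ((Sum.inr.injEq _ _).mp ((Sum.inr.injEq _ _).mp heq))
      obtain ⟨a1, ha1, hbra1, hka1⟩ := hintH1v x hx y1 hy1 hval
      refine ⟨a1, ha1, hbra1, ?_⟩
      rw [hk1'fv a1 ha1]
      refine congrArg Sum.inr (Subtype.ext ?_)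
      have hj : j1.fv (bl1.fv a1) = y2 := by
        apply hd2Ginjv (hj1mor.1 _ (hbl1m.1 a1 ha1)) hy2
        rw [hj1G _ (hbl1m.1 a1 ha1), hcm1a a1 ha1, hka1]
        exact hgeq
      show d2H.fv (j1.fv (bl1.fv a1)) = s.1
      rw [hj, hs1]
  have hint4e : ∀ x ∈ R1.edges, ∀ y ∈ C1.edges, r1'.fe x = c1G.fe y →
      ∃ a ∈ K1.edges, br1.fe a = x ∧ k1'.fe a = y := by
    intro x hx y hy heq
    obtain ⟨s, rfl⟩ := hy
    rw [hr1'fe x hx] at heq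
    rcases hC1covere s with ⟨w, hw, hweq⟩ | ⟨y2, hy2, hs1, y1, hy1, hgeq, h1C⟩
    · rw [hc1GcoreRe s w hw hweq] at heq
      obtain ⟨a2, ha2, hba2, hk⟩ := poF_inr_e heq.symm
      rw [hk2'fe a2 ha2] at hk
      have hval : m2'.fe (bl2.fe a2) = r1.fe x :=
        congrArg Subtype.val ((Sum.inr.injEq _ _).mp hk)
      obtain ⟨a1, ha1, hbra1, hka1⟩ := hintH1e x hx (j2.fe (bl2.fe a2))
        (hj2mor.2.1 _ (hbl2m.2.1 a2 ha2)) hval.symm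
      refine ⟨a1, ha1, hbra1, ?_⟩
      rw [hk1'fe a1 ha1]
      refine congrArg Sum.inr (Subtype.ext ?_)
      have hj : j1.fe (bl1.fe a1) = k2.fe a2 := by
        apply hd2Ginje (hj1mor.2.1 _ (hbl1m.2.1 a1 ha1)) (hk2m.2.1 a2 ha2)
        rw [hj1Ge _ (hbl1m.2.1 a1 ha1), hcm1ae a1 ha1, hka1, hj2Ge _ (hbl2m.2.1 a2 ha2),
          hcm2ae a2 ha2]
      show d2H.fe (j1.fe (bl1.fe a1)) = s.1
      rw [hj, ← hcm2be a2 ha2, hba2, hweq]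
    · rw [hc1Gcoree s y2 y1 hy2 hy1 hs1 hgeq h1C] at heq
      have hval : r1.fe x = d1H.fe y1 :=
        congrArg Subtype.val ((Sum.inr.injEq _ _).mp ((Sum.inr.injEq _ _).mp heq))
      obtain ⟨a1, ha1, hbra1, hka1⟩ := hintH1e x hx y1 hy1 hval
      refine ⟨a1, ha1, hbra1, ?_⟩
      rw [hk1'fe a1 ha1]
      refine congrArg Sum.inr (Subtype.ext ?_)
      have hj : j1.fe (bl1.fe a1) = y2 := by
        apply hd2Ginje (hj1mor.2.1 _ (hbl1m.2.1 a1 ha1)) hy2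
        rw [hj1Ge _ (hbl1m.2.1 a1 ha1), hcm1ae a1 ha1, hka1]
        exact hgeq
      show d2H.fe (j1.fe (bl1.fe a1)) = s.1
      rw [hj, hs1]
  have hS4po : IsPushout K1 R1 C1 G' br1 k1' r1' c1G :=
    isPushout_of_data hR1 hC1graph hbr1m hk1'morC hr1'mor hc1Gmor hcomm4
      hr1'injv hr1'inje hc1Ginjv hc1Ginje φ4 ψ4 hφ4 hψ4 hint4v hint4e
  -- sequential independence witnesses
  set s1A : PreMorph Vr1 Er1 ((Vk2 ⊕ (Vr1 ⊕ Vd1 × Vh2)) ⊕ {z // z ∈ C2n})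
      ((Ek2 ⊕ (Er1 ⊕ Ed1 × Eh2)) ⊕ {e // e ∈ C2e}) :=
    ⟨fun w => if h : r1.fv w ∈ C2n then Sum.inr ⟨r1.fv w, h⟩
       else Sum.inl (Sum.inr (Sum.inl w)),
     fun w => if h : r1.fe w ∈ C2e then Sum.inr ⟨r1.fe w, h⟩
       else Sum.inl (Sum.inr (Sum.inl w))⟩ with hs1Adef
  have hs1Afv : ∀ w (_ : w ∈ R1.nodes),
      s1A.fv w = Sum.inr ⟨r1.fv w, hravoid1v w ‹_›⟩ := fun w hw => dif_pos _
  have hs1Afe : ∀ w (_ : w ∈ R1.edges),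
      s1A.fe w = Sum.inr ⟨r1.fe w, hravoid1e w ‹_›⟩ := fun w hw => dif_pos _
  have hs1Amor : IsMorphism R1 C2 s1A := by
    refine ⟨?_, ?_, ?_, ?_, ?_, ?_⟩
    · intro w hw; rw [hs1Afv w hw]; exact ⟨_, rfl⟩
    · intro w hw; rw [hs1Afe w hw]; exact ⟨_, rfl⟩
    · intro e he
      rw [hs1Afv _ (hR1.2.2.1 e he), hs1Afe e he]
      exact congrArg Sum.inr (Subtype.ext (hr1m.2.2.1 e he))
    · intro e he
      rw [hs1Afv _ (hR1.2.2.2 e he), hs1Afe e he]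
      exact congrArg Sum.inr (Subtype.ext (hr1m.2.2.2.1 e he))
    · intro w hw; rw [hs1Afv w hw]; exact hr1m.2.2.2.2.1 w hw
    · intro w hw; rw [hs1Afe w hw]; exact hr1m.2.2.2.2.2 w hw
  have hs1Aeq : MorEq R1 (comp c2H s1A) r1 := by
    constructor
    · intro w hw
      show c2H.fv (s1A.fv w) = r1.fv w
      rw [hs1Afv w hw]
      rfl
    · intro w hw
      show c2H.fe (s1A.fe w) = r1.fe w
      rw [hs1Afe w hw]
      rfl
  set s1B : PreMorph Vr2 Er2 ((Vk1 ⊕ (Vr2 ⊕ Vd2 × Vh1)) ⊕ {z // z ∈ C1n})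
      ((Ek1 ⊕ (Er2 ⊕ Ed2 × Eh1)) ⊕ {e // e ∈ C1e}) :=
    ⟨fun w => if h : r2.fv w ∈ C1n then Sum.inr ⟨r2.fv w, h⟩
       else Sum.inl (Sum.inr (Sum.inl w)),
     fun w => if h : r2.fe w ∈ C1e then Sum.inr ⟨r2.fe w, h⟩
       else Sum.inl (Sum.inr (Sum.inl w))⟩ with hs1Bdef
  have hs1Bfv : ∀ w (_ : w ∈ R2.nodes),
      s1B.fv w = Sum.inr ⟨r2.fv w, hravoid2v w ‹_›⟩ := fun w hw => dif_pos _
  have hs1Bfe : ∀ w (_ : w ∈ R2.edges),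
      s1B.fe w = Sum.inr ⟨r2.fe w, hravoid2e w ‹_›⟩ := fun w hw => dif_pos _
  have hs1Bmor : IsMorphism R2 C1 s1B := by
    refine ⟨?_, ?_, ?_, ?_, ?_, ?_⟩
    · intro w hw; rw [hs1Bfv w hw]; exact ⟨_, rfl⟩
    · intro w hw; rw [hs1Bfe w hw]; exact ⟨_, rfl⟩
    · intro e he
      rw [hs1Bfv _ (hR2.2.2.1 e he), hs1Bfe e he]
      exact congrArg Sum.inr (Subtype.ext (hr2m.2.2.1 e he))
    · intro e he
      rw [hs1Bfv _ (hR2.2.2.2 e he), hs1Bfe e he]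
      exact congrArg Sum.inr (Subtype.ext (hr2m.2.2.2.1 e he))
    · intro w hw; rw [hs1Bfv w hw]; exact hr2m.2.2.2.2.1 w hw
    · intro w hw; rw [hs1Bfe w hw]; exact hr2m.2.2.2.2.2 w hw
  have hs1Beq : MorEq R2 (comp c1H s1B) r2 := by
    constructor
    · intro w hw
      show c1H.fv (s1B.fv w) = r2.fv w
      rw [hs1Bfv w hw]
      rfl
    · intro w hw
      show c1H.fe (s1B.fe w) = r2.fe w
      rw [hs1Bfe w hw]
      rfl
  exact ⟨_, _, _, _, _, _, G', C2, C1, m2', k2', c2H, c2G, r2', m1', k1', c1H, c1G, r1',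
    hG'graph, hC1graph, hC2graph, hm2'inj, hm1'inj, ⟨hS1po, hS2po⟩, ⟨hS3po, hS4po⟩,
    ⟨s1A, j2, hs1Amor, hj2mor, hs1Aeq, ⟨fun v _ => rfl, fun e _ => rfl⟩⟩,
    ⟨s1B, j1, hs1Bmor, hj1mor, hs1Beq, ⟨fun v _ => rfl, fun e _ => rfl⟩⟩⟩
end
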